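/- arXiv:2401.14341 — 8 statements merged into one kernel-verified Lean document; each statement's English description precedes it below -/
import Mathlib

section
/- A binary necklace α is symmetric if and only if there exist palindromes β₁ and β₂ (each possibly empty) such that α = β₁β₂. -/
/-- Concatenation of `t` copies of `γ`. -/
def listPow (γ : List Bool) (t : ℕ) : List Bool := (List.replicate t γ).flatten

/-- A string is a necklace if it is lexicographically minimal among its rotations. -/
def IsNecklace (α : List Bool) : Prop := ∀ k : ℕ, α ≤ α.rotate k

/-- A necklace is symmetric if its reversal is one of its rotations. -/
def IsSymmetric (α : List Bool) : Prop := List.IsRotated α.reverse α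

/-- A string is an asymmetric bracelet if it is a necklace that is lexicographically
strictly smaller than every rotation of its reversal. -/
def IsAsymBracelet (α : List Bool) : Prop :=
  IsNecklace α ∧ ∀ k : ℕ, α < α.reverse.rotate k

/-- `A n`: the set of asymmetric bracelets of length `n`. -/
def A (n : ℕ) : Set (List Bool) := {α | α.length = n ∧ IsAsymBracelet α}

/-- `S n`: all length-`n` strings that are rotations of some asymmetric bracelet. -/
def S (n : ℕ) : Set (List Bool) := {β | ∃ α ∈ A n, List.IsRotated α β}

/-- A string is periodic if it is `γ^j` for some string `γ` and some `j ≥ 2`. -/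
def IsPeriodic (α : List Bool) : Prop := ∃ γ : List Bool, ∃ j : ℕ, 2 ≤ j ∧ listPow γ j = α

/-- `ap α`: the aperiodic prefix, i.e. the shortest `γ` with `α = γ^t`. -/
noncomputable def ap (α : List Bool) : List Bool :=
  α.take (sInf {p | ∃ γ : List Bool, γ.length = p ∧ ∃ t : ℕ, listPow γ t = α})

/-- Flip the first occurrence of the bit `b`. -/
def flipFirst (b : Bool) : List Bool → List Bool
  | [] => []
  | a :: rest => if a = b then (!b) :: rest else a :: flipFirst b rest

/-- Flip the first `1` to a `0`. -/
def firstone (α : List Bool) : List Bool := flipFirst true α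

/-- Flip the last `0` to a `1`. -/
def lastzero (α : List Bool) : List Bool := (flipFirst false α.reverse).reverse

/-- The lexicographically least rotation of `α`. -/
noncomputable def neckOf (α : List Bool) : List Bool :=
  ((List.range (α.length + 1)).map α.rotate).foldr min α

/-- Flip the last bit (a `1`) to `0` and take the lexicographically least rotation. -/
noncomputable def lastone (α : List Bool) : List Bool := neckOf (α.dropLast ++ [false])

/-- Flip the first bit (a `0`) to `1` and take the lexicographically least rotation. -/
noncomputable def firstzero (α : List Bool) : List Bool := neckOf (true :: α.tail)

/-- The root `0^{n-4}1011`. -/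
def rootStr (n : ℕ) : List Bool := List.replicate (n - 4) false ++ [true, false, true, true]

open Classical in
/-- The parent rule. -/
noncomputable def parentStr (n : ℕ) (α : List Bool) : List Bool :=
  if firstone α ∈ A n then firstone α
  else if lastone α ∈ A n then lastone α
  else lastzero α

/-- Cyclic window of length `n` of `o` starting at position `i` (0-indexed). -/
def cycWin (o : List Bool) (n i : ℕ) : List Bool :=
  (List.range n).map fun k => o.getD ((i + k) % o.length) false

/-- `o` is an orientable sequence of order `n`: its forward cyclic windows of length `n`
together with their reversals are `2·|o|` pairwise distinct strings. -/
def IsOS (n : ℕ) (o : List Bool) : Prop :=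
  ∀ i < o.length, ∀ j < o.length,
    (cycWin o n i = cycWin o n j → i = j) ∧ cycWin o n i ≠ (cycWin o n j).reverse

open Classical in
/-- The successor rule `g`. -/
noncomputable def succRule (α : List Bool) : Bool :=
  let n := α.length
  let i := n - α.reverse.idxOf true
  let j := α.tail.idxOf false + 2
  let β₁ := List.replicate (n - i) false ++ true :: α.tail.take (i - 1)
  let β₂ := α.tail ++ [true]
  let β₃ := α.drop (j - 1) ++ false :: List.replicate (j - 2) true
  if (β₁ ∈ A n ∧ firstone β₁ ∈ A n)
      ∨ (β₂ ∈ A n ∧ lastone β₂ ∈ A n ∧ firstone β₂ ∉ A n)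
      ∨ (β₃ ∈ A n ∧ lastzero β₃ ∈ A n ∧ firstone β₃ ∉ A n ∧ lastone β₃ ∉ A n)
  then !α.headD false else α.headD false

/-- The shift map `σ(a₁a₂⋯a_n) = a₂⋯a_n·g(a₁a₂⋯a_n)`. -/
noncomputable def sigmaMap (α : List Bool) : List Bool := α.tail ++ [succRule α]

/-- A binary necklace `α` is symmetric if and only if there exist palindromes
`β₁` and `β₂` (each possibly empty) such that `α = β₁β₂`. -/
theorem symmetric_iff_two_palindromes (α : List Bool) (hα : IsNecklace α) :
    IsSymmetric α ↔
      ∃ β₁ β₂ : List Bool, β₁.reverse = β₁ ∧ β₂.reverse = β₂ ∧ α = β₁ ++ β₂ := by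
  unfold IsSymmetric
  constructor
  · intro h
    obtain ⟨n, hn, hrot⟩ := List.isRotated_iff_mod.mp h
    set l₁ := α.reverse.take n with hl₁
    set l₂ := α.reverse.drop n with hl₂
    have hsplit : α.reverse = l₁ ++ l₂ := (List.take_append_drop n α.reverse).symm
    have hα : α = l₂ ++ l₁ := by
      rw [← hrot, List.rotate_eq_drop_append_take hn]
    have key : l₁ ++ l₂ = l₁.reverse ++ l₂.reverse := by
      rw [← hsplit, hα]; simp
    have hlen : l₁.length = l₁.reverse.length := by simp
    obtain ⟨h1, h2⟩ := List.append_inj key hlen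
    exact ⟨l₂, l₁, h2.symm, h1.symm, hα⟩
  · rintro ⟨β₁, β₂, h1, h2, rfl⟩
    have : (β₁ ++ β₂).reverse = β₂ ++ β₁ := by rw [List.reverse_append, h1, h2]
    rw [this]
    exact List.isRotated_append
end

section
/- Let s ≥ 1 and let α = 0^s·β be a symmetric necklace such that the string β begins with 1, ends with 1, and does not contain 0^s as a substring. Then β is a palindrome. -/
/-- If `s ≥ 1` and `α = 0^s·β` is a symmetric necklace where `β` begins
with `1`, ends with `1`, and does not contain `0^s` as a substring, then `β` is a palindrome. -/
theorem palindrome_of_symmetric_necklace (s : ℕ) (hs : 1 ≤ s) (β : List Bool)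
    (hhead : β.head? = some true) (hlast : β.getLast? = some true)
    (hnosub : ¬ List.replicate s false <:+: β)
    (hneck : IsNecklace (List.replicate s false ++ β))
    (hsym : IsSymmetric (List.replicate s false ++ β)) :
    β.reverse = β := by
  classical
  have hβne : β ≠ [] := by rintro rfl; simp at hhead
  have hβpos : 0 < β.length := List.length_pos_iff.mpr hβne
  have hαlen : (List.replicate s false ++ β).length = s + β.length := by simp
  have hpos : 0 < (List.replicate s false ++ β).length := by omega
  -- α is rotated-equivalent to 0^s ++ β.reverse
  have h1 : (List.replicate s false ++ β) ~r (List.replicate s false ++ β.reverse) := by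
    have h2 : (List.replicate s false ++ β).reverse
        = β.reverse ++ List.replicate s false := by simp
    have h3 : (β.reverse ++ List.replicate s false) ~r
        (List.replicate s false ++ β.reverse) := List.isRotated_append
    exact (h2 ▸ hsym.symm).trans h3
  obtain ⟨k, hk⟩ := h1
  rw [← List.rotate_mod] at hk
  have hjlt : k % (List.replicate s false ++ β).length
      < (List.replicate s false ++ β).length := Nat.mod_lt _ hpos
  rw [List.rotate_eq_drop_append_take hjlt.le] at hk
  generalize hjdef : k % (List.replicate s false ++ β).length = j at hk hjlt
  rw [hαlen] at hjlt
  rcases Nat.eq_zero_or_pos j with rfl | hjpos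
  · simp at hk
    exact hk.symm
  exfalso
  rcases Nat.lt_or_ge s j with hjs | hjs
  · -- s < j : the 0^s window lands inside β or wraps over β's last char
    set i := j - s with hi
    have hilt : i < β.length := by omega
    have hdrop : (List.replicate s false ++ β).drop j = β.drop i := by
      rw [List.drop_append]
      simp [List.drop_replicate, hi, Nat.sub_eq_zero_of_le hjs.le]
    have htake : (List.replicate s false ++ β).take j
        = List.replicate s false ++ β.take i := by
      rw [List.take_append]
      simp [List.take_replicate, hi, min_eq_right hjs.le]
    rw [hdrop, htake] at hk
    have hdlen : (β.drop i).length = β.length - i := by simp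
    rcases Nat.lt_or_ge (β.length - i) s with hd | hd
    · -- short tail: β.drop i would be all zeros, contradicting last char = 1
      have h7 := congrArg (List.take (β.length - i)) hk
      rw [List.take_left' hdlen, List.take_append,
        List.length_replicate, List.take_replicate, min_eq_left hd.le,
        Nat.sub_eq_zero_of_le hd.le] at h7
      simp only [List.take_zero, List.append_nil] at h7
      have hlast' : β.getLast? = some false := by
        conv_lhs => rw [← List.take_append_drop i β]
        rw [List.getLast?_append_of_ne_nil _ (by
          intro hnil
          have := congrArg List.length hnil
          simp [hdlen] at this; omega)]
        rw [h7]
        have : β.length - i ≠ 0 := by omega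
        cases hd' : β.length - i with
        | zero => omega
        | succ m => rw [List.replicate_succ', List.getLast?_concat]
      rw [hlast'] at hlast
      simp at hlast
    · -- long tail: 0^s is a factor of β
      have h6 := congrArg (List.take s) hk
      rw [List.take_left' (l₁ := List.replicate s false) (by simp),
        List.take_append, hdlen,
        Nat.sub_eq_zero_of_le hd, List.take_zero, List.append_nil] at h6
      exact hnosub (h6 ▸ ((List.take_prefix s (β.drop i)).isInfix.trans
        (List.drop_suffix i β).isInfix))
  · -- 0 < j ≤ s : position s of α is β's head = 1, but must be 0
    have hdrop : (List.replicate s false ++ β).drop j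
        = List.replicate (s - j) false ++ β := by
      rw [List.drop_append]
      simp [List.drop_replicate, Nat.sub_eq_zero_of_le hjs]
    have htake : (List.replicate s false ++ β).take j = List.replicate j false := by
      rw [List.take_append]
      simp [List.take_replicate, min_eq_left hjs, Nat.sub_eq_zero_of_le hjs]
    rw [hdrop, htake] at hk
    have h4 := congrArg (List.drop (s - j)) hk
    rw [List.append_assoc, List.drop_left' (by simp)] at h4
    have hrep : List.replicate s false
        = List.replicate (s - j) false ++ List.replicate j false := by
      rw [← List.replicate_add]; congr 1; omega
    rw [hrep, List.append_assoc, List.drop_left' (by simp)] at h4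
    -- h4 : β ++ replicate j false = replicate j false ++ β.reverse
    obtain ⟨γ, rfl⟩ : ∃ γ, β = true :: γ := by
      cases β with
      | nil => simp at hhead
      | cons b t => exact ⟨t, by simp at hhead; simp [hhead]⟩
    cases j with
    | zero => omega
    | succ m =>
      rw [List.replicate_succ] at h4
      simp at h4
end

section
/- For every n ≥ 6, the string 0^{n−4}1011 is an asymmetric bracelet of length n; moreover it is the lexicographically smallest element of A(n), and it is the unique element of A(n) having 0^{n−4} as a prefix. -/
private lemma lex_cancel (p u v : List Bool) : p ++ u < p ++ v ↔ u < v := by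
  induction p with
  | nil => exact Iff.rfl
  | cons a p ih =>
    rw [List.cons_append, List.cons_append]
    exact (List.lex_cons_iff).trans ih

private lemma rotate_app (l₁ l₂ : List Bool) (m : ℕ) (hm : l₁.length = m) :
    (l₁ ++ l₂).rotate m = l₂ ++ l₁ := by
  subst hm
  rw [List.rotate_eq_drop_append_take (by simp), List.drop_left, List.take_left]

private lemma replicate_lt {a b : ℕ} (h : a < b) (u v : List Bool) :
    List.replicate b false ++ true :: v < List.replicate a false ++ true :: u := by
  obtain ⟨c, rfl⟩ : ∃ c, b = a + (c + 1) := ⟨b - a - 1, by omega⟩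
  rw [List.replicate_add, List.append_assoc]
  refine (lex_cancel _ _ _).mpr ?_
  rw [List.replicate_succ, List.cons_append]
  exact List.Lex.rel (by decide)

private lemma lt_of_not_prefix (s : ℕ) (α β : List Bool) (hl : s ≤ α.length)
    (h : ¬ List.replicate s false <+: α) : List.replicate s false ++ β < α := by
  induction s generalizing α with
  | zero => exact absurd (List.nil_prefix) h
  | succ t ih =>
    cases α with
    | nil => simp at hl
    | cons a α =>
      cases a
      · have h1 : t ≤ α.length := by simp only [List.length_cons] at hl; omega
        have h2 : ¬ List.replicate t false <+: α := fun hp =>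
          h (by rw [List.replicate_succ]; exact List.cons_prefix_cons.mpr ⟨rfl, hp⟩)
        rw [List.replicate_succ, List.cons_append]
        exact List.Lex.cons (ih α h1 h2)
      · rw [List.replicate_succ, List.cons_append]
        exact List.Lex.rel (by decide)


private lemma case_elim (s z : ℕ) (w l₁ v α : List Bool)
    (hα : α = List.replicate s false ++ w)
    (h1 : l₁ ++ List.replicate z false = w.reverse)
    (h2 : List.replicate z false ++ l₁ = v)
    (hnlt : ¬ w < v)
    (hA : ∀ k : ℕ, α < α.reverse.rotate k) : False := by
  have hrev : α.reverse = l₁ ++ List.replicate (z + s) false := by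
    rw [hα, List.reverse_append, List.reverse_replicate, ← h1,
        List.append_assoc, ← List.replicate_add]
  have key : α.reverse.rotate l₁.length = List.replicate s false ++ v := by
    rw [hrev, rotate_app l₁ _ _ rfl, ← h2, ← List.append_assoc,
        Nat.add_comm z s, List.replicate_add]
  have h3 := hA l₁.length
  rw [key, hα] at h3
  exact hnlt ((lex_cancel _ _ _).mp h3)


/-- For `n ≥ 6`, the string `0^{n-4}1011` is an asymmetric bracelet of
length `n`; it is the lexicographically smallest element of `A n`, and it is the unique
element of `A n` having `0^{n-4}` as a prefix. -/
theorem rootStr_mem_A_smallest_unique (n : ℕ) (hn : 6 ≤ n) :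
    rootStr n ∈ A n ∧
      (∀ α ∈ A n, rootStr n ≤ α) ∧
      (∀ α ∈ A n, List.replicate (n - 4) false <+: α → α = rootStr n) := by
  obtain ⟨s, rfl⟩ : ∃ s, n = s + 4 := ⟨n - 4, by omega⟩
  have hs : 2 ≤ s := by omega
  have hroot : rootStr (s + 4) = List.replicate s false ++ [true, false, true, true] := by
    rw [rootStr, Nat.add_sub_cancel]
  have root_lt : ∀ (a : ℕ) (u : List Bool),
      (a < s ∨ (a = s ∧ [false, true, true] < u)) →
      rootStr (s + 4) < List.replicate a false ++ true :: u := by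
    intro a u h
    rw [hroot]
    rcases h with h | ⟨h, hlt⟩
    · exact replicate_lt h u [false, true, true]
    · rw [← h]
      exact (lex_cancel _ _ _).mpr (List.Lex.cons hlt)
  -- Necklace property
  have hNeck : IsNecklace (rootStr (s + 4)) := by
    have main : ∀ m < s + 4, rootStr (s + 4) ≤ (rootStr (s + 4)).rotate m := by
      intro m hm
      have hcase : m ≤ s ∨ m = s + 1 ∨ m = s + 2 ∨ m = s + 3 := by omega
      rcases hcase with hms | rfl | rfl | rfl
      · rcases Nat.eq_zero_or_pos m with rfl | hm0
        · rw [List.rotate_zero]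
        · have hsplit : rootStr (s + 4) =
              List.replicate m false ++ (List.replicate (s - m) false ++ [true, false, true, true]) := by
            rw [hroot, ← List.append_assoc, ← List.replicate_add, Nat.add_sub_cancel' hms]
          have hK : (rootStr (s + 4)).rotate m =
              (List.replicate (s - m) false ++ [true, false, true, true]) ++ List.replicate m false := by
            conv_lhs => rw [hsplit]
            exact rotate_app _ _ m (by simp)
          rw [hK, List.append_assoc]
          exact le_of_lt (root_lt (s - m) _ (Or.inl (by omega)))
      · have hsplit : rootStr (s + 4) =
            (List.replicate s false ++ [true]) ++ [false, true, true] := by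
          rw [hroot, List.append_assoc]
          rfl
        have hK : (rootStr (s + 4)).rotate (s + 1) =
            [false, true, true] ++ (List.replicate s false ++ [true]) := by
          conv_lhs => rw [hsplit]
          exact rotate_app _ _ _ (by simp)
        rw [hK]
        exact le_of_lt (root_lt 1 _ (Or.inl (by omega)))
      · have hsplit : rootStr (s + 4) =
            (List.replicate s false ++ [true, false]) ++ [true, true] := by
          rw [hroot, List.append_assoc]
          rfl
        have hK : (rootStr (s + 4)).rotate (s + 2) =
            [true, true] ++ (List.replicate s false ++ [true, false]) := by
          conv_lhs => rw [hsplit]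
          exact rotate_app _ _ _ (by simp)
        rw [hK]
        exact le_of_lt (root_lt 0 _ (Or.inl (by omega)))
      · have hsplit : rootStr (s + 4) =
            (List.replicate s false ++ [true, false, true]) ++ [true] := by
          rw [hroot, List.append_assoc]
          rfl
        have hK : (rootStr (s + 4)).rotate (s + 3) =
            [true] ++ (List.replicate s false ++ [true, false, true]) := by
          conv_lhs => rw [hsplit]
          exact rotate_app _ _ _ (by simp)
        rw [hK]
        exact le_of_lt (root_lt 0 _ (Or.inl (by omega)))
    intro k
    have hlen : (rootStr (s + 4)).length = s + 4 := by simp [rootStr]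
    rw [← List.rotate_mod, hlen]
    exact main _ (Nat.mod_lt _ (by omega))
  -- Asymmetry property
  have hrev : (rootStr (s + 4)).reverse = [true, true, false, true] ++ List.replicate s false := by
    rw [hroot, List.reverse_append, List.reverse_replicate]
    rfl
  have hAsym : ∀ k : ℕ, rootStr (s + 4) < (rootStr (s + 4)).reverse.rotate k := by
    have main : ∀ m < s + 4, rootStr (s + 4) < (rootStr (s + 4)).reverse.rotate m := by
      intro m hm
      rcases Nat.lt_or_ge m 4 with hm4 | hm4
      · interval_cases m
        · rw [List.rotate_zero, hrev]
          exact root_lt 0 _ (Or.inl (by omega))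
        · have hK : (rootStr (s + 4)).reverse.rotate 1 =
              ([true, false, true] ++ List.replicate s false) ++ [true] := by
            rw [hrev]
            exact rotate_app [true] ([true, false, true] ++ List.replicate s false) 1 rfl
          rw [hK]
          exact root_lt 0 _ (Or.inl (by omega))
        · have hK : (rootStr (s + 4)).reverse.rotate 2 =
              ([false, true] ++ List.replicate s false) ++ [true, true] := by
            rw [hrev]
            exact rotate_app [true, true] ([false, true] ++ List.replicate s false) 2 rfl
          rw [hK]
          exact root_lt 1 _ (Or.inl (by omega))
        · have hK : (rootStr (s + 4)).reverse.rotate 3 =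
              ([true] ++ List.replicate s false) ++ [true, true, false] := by
            rw [hrev]
            exact rotate_app [true, true, false] ([true] ++ List.replicate s false) 3 rfl
          rw [hK]
          exact root_lt 0 _ (Or.inl (by omega))
      · obtain ⟨j, rfl⟩ : ∃ j, m = 4 + j := ⟨m - 4, by omega⟩
        have hj : j < s := by omega
        have hsplit : (rootStr (s + 4)).reverse =
            ([true, true, false, true] ++ List.replicate j false) ++ List.replicate (s - j) false := by
          rw [hrev, List.append_assoc, ← List.replicate_add, Nat.add_sub_cancel' (le_of_lt hj)]
        have hK : (rootStr (s + 4)).reverse.rotate (4 + j) =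
            List.replicate (s - j) false ++ ([true, true, false, true] ++ List.replicate j false) := by
          conv_lhs => rw [hsplit]
          exact rotate_app _ _ _ (by simp; omega)
        rw [hK]
        rcases Nat.eq_zero_or_pos j with rfl | hj0
        · exact root_lt s _ (Or.inr ⟨by omega, by decide⟩)
        · exact root_lt (s - j) _ (Or.inl (by omega))
    intro k
    have hlen : (rootStr (s + 4)).reverse.length = s + 4 := by simp [rootStr]
    rw [← List.rotate_mod, hlen]
    exact main _ (Nat.mod_lt _ (by omega))
  have hmem : rootStr (s + 4) ∈ A (s + 4) := by
    refine ⟨?_, hNeck, hAsym⟩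
    simp [rootStr]
  -- Uniqueness
  have huniq : ∀ α ∈ A (s + 4),
      List.replicate (s + 4 - 4) false <+: α → α = rootStr (s + 4) := by
    intro α hα hpre
    obtain ⟨hlen, hN, hA⟩ := hα
    obtain ⟨w, hw⟩ := hpre
    rw [Nat.add_sub_cancel] at hw
    have hwlen : w.length = 4 := by
      have h := hlen
      rw [← hw] at h
      simp at h
      omega
    have h4 : ∃ a b c d, w = [a, b, c, d] := by
      rcases w with _ | ⟨a, w⟩; · simp at hwlen
      rcases w with _ | ⟨b, w⟩; · simp at hwlen
      rcases w with _ | ⟨c, w⟩; · simp at hwlen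
      rcases w with _ | ⟨d, w⟩; · simp at hwlen
      rcases w with _ | ⟨e, w⟩
      · exact ⟨a, b, c, d, rfl⟩
      · simp at hwlen
    obtain ⟨a, b, c, d, rfl⟩ := h4
    have hα' : α = List.replicate s false ++ [a, b, c, d] := hw.symm
    rcases a <;> rcases b <;> rcases c <;> rcases d
    · exact (case_elim s 4 _ [] [false,false,false,false] α hα' (by decide) (by decide) (by decide) hA).elim
    · exact (case_elim s 3 _ [true] [false,false,false,true] α hα' (by decide) (by decide) (by decide) hA).elim
    · exact (case_elim s 2 _ [false,true] [false,false,false,true] α hα' (by decide) (by decide) (by decide) hA).elim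
    · exact (case_elim s 2 _ [true,true] [false,false,true,true] α hα' (by decide) (by decide) (by decide) hA).elim
    · exact (case_elim s 1 _ [false,false,true] [false,false,false,true] α hα' (by decide) (by decide) (by decide) hA).elim
    · exact (case_elim s 1 _ [true,false,true] [false,true,false,true] α hα' (by decide) (by decide) (by decide) hA).elim
    · exact (case_elim s 1 _ [false,true,true] [false,false,true,true] α hα' (by decide) (by decide) (by decide) hA).elim
    · exact (case_elim s 1 _ [true,true,true] [false,true,true,true] α hα' (by decide) (by decide) (by decide) hA).elim
    · exact (case_elim s 0 _ [false,false,false,true] [false,false,false,true] α hα' (by decide) (by decide) (by decide) hA).elim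
    · exact (case_elim s 0 _ [true,false,false,true] [true,false,false,true] α hα' (by decide) (by decide) (by decide) hA).elim
    · exact (case_elim s 0 _ [false,true,false,true] [false,true,false,true] α hα' (by decide) (by decide) (by decide) hA).elim
    · rw [hα', hroot]
    · exact (case_elim s 0 _ [false,false,true,true] [false,false,true,true] α hα' (by decide) (by decide) (by decide) hA).elim
    · exact (case_elim s 0 _ [true,false,true,true] [true,false,true,true] α hα' (by decide) (by decide) (by decide) hA).elim
    · exact (case_elim s 0 _ [false,true,true,true] [false,true,true,true] α hα' (by decide) (by decide) (by decide) hA).elim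
    · exact (case_elim s 0 _ [true,true,true,true] [true,true,true,true] α hα' (by decide) (by decide) (by decide) hA).elim
  refine ⟨hmem, ?_, huniq⟩
  intro α hα
  by_cases hp : List.replicate (s + 4 - 4) false <+: α
  · rw [huniq α hα hp]
  · refine le_of_lt ?_
    rw [hroot]
    refine lt_of_not_prefix s α _ ?_ ?_
    · rw [hα.1]; omega
    · rw [Nat.add_sub_cancel] at hp; exact hp
end

section
/- Every asymmetric bracelet of length n contains at least three 1s and at least three 0s; that is, its weight w (number of 1s) satisfies 3 ≤ w ≤ n − 3. -/
lemma eq_rep_of_count_zero {b : Bool} {l : List Bool} (h : l.count b = 0) :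
    l = List.replicate l.length (!b) := by
  apply List.eq_replicate_of_mem
  intro a ha
  have : a ≠ b := by
    intro rfl'; subst rfl'
    exact (List.count_eq_zero.mp h) ha
  cases a <;> cases b <;> simp_all

lemma count_split {b : Bool} {m : ℕ} : ∀ (l : List Bool), l.count b = m + 1 →
    ∃ x y, l = x ++ b :: y ∧ x.count b = 0 ∧ y.count b = m := by
  intro l
  induction l with
  | nil => simp
  | cons a t ih =>
    intro h
    by_cases hab : a = b
    · subst hab
      refine ⟨[], t, rfl, rfl, ?_⟩
      simpa using h
    · have ht : t.count b = m + 1 := by simpa [List.count_cons, hab] using h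
      obtain ⟨x, y, hxy, hx, hy⟩ := ih ht
      exact ⟨a :: x, y, by simp [hxy], by simp [List.count_cons, hab, hx], hy⟩

lemma rev_rotated_of_count_le_two {b : Bool} {l : List Bool} (h : l.count b ≤ 2) :
    l.reverse ~r l := by
  interval_cases hc : l.count b
  · -- count = 0
    have := eq_rep_of_count_zero hc
    rw [this, List.reverse_replicate]
  · obtain ⟨x, y, rfl, hx, hy⟩ := count_split l hc
    have hx' := eq_rep_of_count_zero hx
    have hy' := eq_rep_of_count_zero hy
    rw [hx', hy']
    set p := x.length; set q := y.length
    have h1 : (List.replicate p (!b) ++ b :: List.replicate q (!b)).rotate p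
        = b :: List.replicate (q + p) (!b) := by
      have := List.rotate_append_length_eq (List.replicate p (!b)) (b :: List.replicate q (!b))
      simp only [List.length_replicate] at this
      rw [this]; simp [← List.replicate_add]
    have h2 : (List.replicate p (!b) ++ b :: List.replicate q (!b)).reverse.rotate q
        = b :: List.replicate (q + p) (!b) := by
      rw [List.reverse_append]
      simp only [List.reverse_cons, List.reverse_replicate]
      have := List.rotate_append_length_eq (List.replicate q (!b)) (b :: List.replicate p (!b))
      simp only [List.length_replicate] at this
      rw [show List.replicate q (!b) ++ [b] ++ List.replicate p (!b)
          = List.replicate q (!b) ++ (b :: List.replicate p (!b)) by simp, this]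
      simp [← List.replicate_add, Nat.add_comm]
    exact List.IsRotated.trans ⟨q, h2⟩ (List.IsRotated.symm ⟨p, h1⟩)
  · obtain ⟨x, t, rfl, hx, ht⟩ := count_split l hc
    obtain ⟨y, z, rfl, hy, hz⟩ := count_split t ht
    have hx' := eq_rep_of_count_zero hx
    have hy' := eq_rep_of_count_zero hy
    have hz' := eq_rep_of_count_zero hz
    rw [hx', hy', hz']
    set p := x.length; set q := y.length; set r := z.length
    have h1 : (List.replicate p (!b) ++ b :: (List.replicate q (!b) ++ b :: List.replicate r (!b))).rotate p
        = b :: (List.replicate q (!b) ++ b :: List.replicate (r + p) (!b)) := by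
      have := List.rotate_append_length_eq (List.replicate p (!b))
        (b :: (List.replicate q (!b) ++ b :: List.replicate r (!b)))
      simp only [List.length_replicate] at this
      rw [this]; simp [← List.replicate_add]
    have h2 : (List.replicate p (!b) ++ b :: (List.replicate q (!b) ++ b :: List.replicate r (!b))).reverse.rotate r
        = b :: (List.replicate q (!b) ++ b :: List.replicate (r + p) (!b)) := by
      have hrev : (List.replicate p (!b) ++ b :: (List.replicate q (!b) ++ b :: List.replicate r (!b))).reverse
          = List.replicate r (!b) ++ b :: (List.replicate q (!b) ++ b :: List.replicate p (!b)) := by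
        simp [List.reverse_replicate]
      rw [hrev]
      have := List.rotate_append_length_eq (List.replicate r (!b))
        (b :: (List.replicate q (!b) ++ b :: List.replicate p (!b)))
      simp only [List.length_replicate] at this
      rw [this]; simp [← List.replicate_add, Nat.add_comm]
    exact List.IsRotated.trans ⟨r, h2⟩ (List.IsRotated.symm ⟨p, h1⟩)

lemma count_true_add_count_false (l : List Bool) : l.count true + l.count false = l.length := by
  induction l with
  | nil => rfl
  | cons a t ih =>
    cases a <;> simp only [List.count_cons, List.length_cons, ← ih] <;> simp <;> omega

/-- Every asymmetric bracelet of length `n` contains at least three `1`s and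
at least three `0`s; that is, its weight `w` satisfies `3 ≤ w ≤ n - 3`. -/
theorem asymBracelet_weight_bounds (n : ℕ) (α : List Bool) (hα : α ∈ A n) :
    3 ≤ α.count true ∧ 3 ≤ α.count false ∧ α.count true + 3 ≤ n := by
  obtain ⟨hlen, -, hlt⟩ := hα
  have key : ∀ b : Bool, 3 ≤ α.count b := by
    intro b
    by_contra h
    obtain ⟨k, hk⟩ := rev_rotated_of_count_le_two (b := b) (l := α) (by omega)
    exact absurd hk (hlt k).ne'
  have hc := count_true_add_count_false α
  refine ⟨key true, key false, ?_⟩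
  have := key false
  omega
end

section
/- Let n ≥ 6 and let r_n = 0^{n−4}1011. For every α ∈ A(n) with α ≠ r_n, the string parent(α) is aperiodic. (Consequently, every periodic element of A(n) is a leaf of the cycle-joining tree induced by the parent rule.) -/
private lemma bool_ne_iff {a b : Bool} (h : ¬ a = b) : a = !b := by
  cases a <;> cases b <;> simp_all

private lemma lex_lt_at (i : ℕ) (x y : List Bool) (hx : i < x.length) (hy : i < y.length)
    (hpre : ∀ j, j < i → x.getD j false = y.getD j false)
    (h0 : x.getD i false = false) (h1 : y.getD i false = true) : x < y := by
  induction i generalizing x y with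
  | zero =>
    cases x with
    | nil => simp at hx
    | cons a xs =>
      cases y with
      | nil => simp at hy
      | cons b ys =>
        rw [List.getD_cons_zero] at h0 h1
        exact List.Lex.rel (by rw [h0, h1]; exact Bool.false_lt_true)
  | succ i ih =>
    cases x with
    | nil => simp at hx
    | cons a xs =>
      cases y with
      | nil => simp at hy
      | cons b ys =>
        have hab : a = b := by simpa using hpre 0 (Nat.succ_pos _)
        subst hab
        refine List.Lex.cons (ih xs ys (by simpa using hx) (by simpa using hy)
          (fun j hj => by simpa using hpre (j+1) (Nat.succ_lt_succ hj))
          (by simpa using h0) (by simpa using h1))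

private lemma neck_absurd {α : List Bool} (hneck : IsNecklace α) {k : ℕ}
    (h : α.rotate k < α) : False := absurd h (not_lt.mpr (hneck k))

private lemma getD_rotate (l : List Bool) (k i : ℕ) (hi : i < l.length) :
    (l.rotate k).getD i false = l.getD ((i + k) % l.length) false := by
  have h1 : i < (l.rotate k).length := by rwa [List.length_rotate]
  have h2 : (i + k) % l.length < l.length := Nat.mod_lt _ (by omega)
  rw [List.getD_eq_getElem _ _ h1, List.getD_eq_getElem _ _ h2, List.getElem_rotate]

private lemma getD_set (l : List Bool) (s : ℕ) (b : Bool) (i : ℕ) (hi : i < l.length) :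
    (l.set s b).getD i false = if s = i then b else l.getD i false := by
  have h1 : i < (l.set s b).length := by rwa [List.length_set]
  rw [List.getD_eq_getElem _ _ h1, List.getElem_set]
  split
  · rfl
  · rw [List.getD_eq_getElem _ _ hi]

private lemma getD_reverse (l : List Bool) (i : ℕ) (hi : i < l.length) :
    l.reverse.getD i false = l.getD (l.length - 1 - i) false := by
  rw [List.getD_eq_getElem _ _ (by simpa using hi), List.getD_eq_getElem _ _ (by omega),
    List.getElem_reverse]

private lemma flipFirst_spec (b : Bool) : ∀ (l : List Bool), b ∈ l →
    ∃ s, s < l.length ∧ (∀ j, j < s → l.getD j false = !b) ∧ l.getD s false = b ∧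
      flipFirst b l = l.set s (!b)
  | [], hb => absurd hb List.not_mem_nil
  | a :: rest, hb => by
    by_cases hab : a = b
    · subst hab
      refine ⟨0, Nat.succ_pos _, fun j hj => absurd hj (Nat.not_lt_zero j),
        List.getD_cons_zero, ?_⟩
      simp [flipFirst]
    · have hb' : b ∈ rest := by
        rcases List.mem_cons.1 hb with h | h
        · exact absurd h.symm hab
        · exact h
      obtain ⟨s, hs, h1, h2, h3⟩ := flipFirst_spec b rest hb'
      refine ⟨s + 1, Nat.succ_lt_succ hs, ?_, by simpa using h2, ?_⟩
      · intro j hj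
        match j, hj with
        | 0, _ => simpa using bool_ne_iff hab
        | (j+1), hj => simpa using h1 j (Nat.lt_of_succ_lt_succ hj)
      · show flipFirst b (a :: rest) = (a :: rest).set (s+1) (!b)
        simp [flipFirst, hab, h3]

private lemma listPow_succ (γ : List Bool) (t : ℕ) : listPow γ (t+1) = γ ++ listPow γ t := by
  simp [listPow, List.replicate_succ]

private lemma listPow_length (γ : List Bool) (t : ℕ) : (listPow γ t).length = t * γ.length := by
  induction t with
  | zero => simp [listPow]
  | succ t ih =>
    rw [listPow_succ, List.length_append, ih, Nat.succ_mul]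
    omega

private lemma listPow_getD (γ : List Bool) (hγ : 0 < γ.length) :
    ∀ (t : ℕ) (i : ℕ), i < (listPow γ t).length →
      (listPow γ t).getD i false = γ.getD (i % γ.length) false
  | 0, i, h => by simp [listPow] at h
  | (t+1), i, h => by
    rw [listPow_succ]
    by_cases h' : i < γ.length
    · rw [List.getD_append _ _ _ _ h', Nat.mod_eq_of_lt h']
    · push_neg at h'
      rw [List.getD_append_right _ _ _ _ h']
      have hlt : i - γ.length < (listPow γ t).length := by
        rw [listPow_succ, List.length_append] at h; omega
      rw [listPow_getD γ hγ t _ hlt, ← Nat.mod_eq_sub_mod h']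

private lemma pow_mod {γ β : List Bool} {j : ℕ} (hβ : listPow γ j = β)
    (i : ℕ) (hi : i < β.length) :
    β.getD i false = β.getD (i % γ.length) false := by
  subst hβ
  have hγ : 0 < γ.length := by
    rcases Nat.eq_zero_or_pos γ.length with h | h
    · rw [listPow_length, h, Nat.mul_zero] at hi; omega
    · exact h
  rw [listPow_getD γ hγ j i hi, listPow_getD γ hγ j (i % γ.length)
      (by
        rw [listPow_length] at hi ⊢
        have h1 : i % γ.length < γ.length := Nat.mod_lt _ hγ
        rcases Nat.eq_zero_or_pos j with hj | hj
        · subst hj; omega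
        · have h2 := Nat.le_mul_of_pos_left γ.length hj
          omega),
    Nat.mod_mod_of_dvd _ dvd_rfl]

private lemma asym_ne_replicate {α : List Bool} (hasym : ∀ k, α < α.reverse.rotate k)
    (b : Bool) : α ≠ List.replicate α.length b := by
  intro h
  have h2 : α.reverse = α := by
    conv_lhs => rw [h]
    rw [List.reverse_replicate, ← h]
  have h3 := hasym 0
  rw [h2, List.rotate_zero] at h3
  exact lt_irrefl _ h3

private lemma exists_getD_eq {α : List Bool} (b : Bool)
    (h : α ≠ List.replicate α.length (!b)) :
    ∃ i, i < α.length ∧ α.getD i false = b := by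
  by_contra hc
  push_neg at hc
  apply h
  apply List.ext_getElem (by simp)
  intro i h1 h2
  rw [List.getElem_replicate, ← List.getD_eq_getElem _ false h1]
  exact bool_ne_iff (hc i h1)

private lemma foldr_min_choice (l : List (List Bool)) (a : List Bool) :
    l.foldr min a = a ∨ l.foldr min a ∈ l := by
  induction l with
  | nil => exact Or.inl rfl
  | cons x xs ih =>
    simp only [List.foldr_cons]
    rcases le_total x (xs.foldr min a) with h | h
    · rw [min_eq_left h]; exact Or.inr List.mem_cons_self
    · rw [min_eq_right h]
      rcases ih with h' | h'
      · exact Or.inl h'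
      · exact Or.inr (List.mem_cons_of_mem x h')

private lemma neckOf_is_rotate (w : List Bool) : ∃ k, neckOf w = w.rotate k := by
  rcases foldr_min_choice ((List.range (w.length + 1)).map w.rotate) w with h | h
  · exact ⟨0, by rw [neckOf, h, List.rotate_zero]⟩
  · obtain ⟨k, _, hk⟩ := List.mem_map.1 h
    exact ⟨k, hk.symm⟩

private lemma necklace_head_false {α : List Bool} (hneck : IsNecklace α) {k : ℕ}
    (hk : k < α.length) (hkv : α.getD k false = false) : α.getD 0 false = false := by
  by_contra hc
  have h0v : α.getD 0 false = true := bool_ne_iff hc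
  refine neck_absurd hneck (k := k) ?_
  refine lex_lt_at 0 (α.rotate k) α (by rw [List.length_rotate]; omega) (by omega)
    (fun j hj => absurd hj (Nat.not_lt_zero j)) ?_ h0v
  rw [getD_rotate _ _ _ (by omega), Nat.zero_add, Nat.mod_eq_of_lt hk]
  exact hkv

-- ==== Case 1: parent = firstone ====

private lemma caseA {n : ℕ} (hn : 6 ≤ n) {α : List Bool} (hlen : α.length = n)
    (hneck : IsNecklace α) (hasym : ∀ k, α < α.reverse.rotate k)
    (hA : firstone α ∈ A n) (hper : IsPeriodic (firstone α)) : False := by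
  classical
  obtain ⟨hβlen, hβneck, hβasym⟩ := hA
  obtain ⟨γ, j, hj, hγ⟩ := hper
  obtain ⟨s0, hs0, hs0v⟩ := exists_getD_eq (α := α) true
    (by simpa using asym_ne_replicate hasym false)
  have hmem : true ∈ α := by
    rw [List.getD_eq_getElem _ _ hs0] at hs0v
    exact hs0v ▸ List.getElem_mem hs0
  obtain ⟨s, hs, hpre, hsv, heq⟩ := flipFirst_spec true α hmem
  rw [hlen] at hs
  have hβ : firstone α = α.set s false := by simpa [firstone] using heq
  rw [hβ] at hβlen hβasym hγ
  set m := γ.length with hm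
  have hnm : n = j * m := by
    have h := congrArg List.length hγ
    rw [listPow_length, List.length_set, hlen, ← hm] at h
    omega
  have hm1 : 1 ≤ m := by
    rcases Nat.eq_zero_or_pos m with h | h
    · rw [h, Nat.mul_zero] at hnm; omega
    · exact h
  have h2m : 2 * m ≤ n := by rw [hnm]; exact Nat.mul_le_mul_right m hj
  have hδget : ∀ i, i < n → (α.set s false).getD i false
      = if s = i then false else α.getD i false :=
    fun i hi => getD_set α s false i (by omega)
  have hδmod : ∀ i, i < n → (α.set s false).getD i false
      = (α.set s false).getD (i % m) false :=
    fun i hi => pow_mod hγ i (by rw [List.length_set]; omega)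
  have hsm : s < m := by
    by_contra hsm
    push_neg at hsm
    refine asym_ne_replicate hβasym false ?_
    refine List.ext_getElem (by simp) ?_
    intro i h1 h2
    have hi : i < n := by rw [List.length_set, hlen] at h1; exact h1
    have hmm : i % m < m := Nat.mod_lt _ (by omega)
    rw [List.getElem_replicate, ← List.getD_eq_getElem _ false h1, hδmod i hi,
      hδget (i % m) (by omega)]
    rw [if_neg (by omega)]
    simpa using hpre (i % m) (by omega)
  refine neck_absurd hneck (k := m) ?_
  have key : ∀ i, i ≤ s → (α.rotate m).getD i false = (α.set s false).getD i false := by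
    intro i hi
    rw [getD_rotate _ _ _ (by omega), hlen, Nat.mod_eq_of_lt (by omega)]
    have h1 : α.getD (i + m) false = (α.set s false).getD (i + m) false := by
      rw [hδget (i + m) (by omega), if_neg (by omega)]
    rw [h1, hδmod (i + m) (by omega), Nat.add_mod_right, Nat.mod_eq_of_lt (by omega)]
  refine lex_lt_at s (α.rotate m) α (by rw [List.length_rotate]; omega) (by omega) ?_ ?_ hsv
  · intro i hi
    rw [key i (by omega), hδget i (by omega), if_neg (by omega)]
  · rw [key s le_rfl, hδget s (by omega), if_pos rfl]

-- ==== Case 2: parent = lastone ====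

private lemma caseB {n : ℕ} (hn : 6 ≤ n) {α : List Bool} (hlen : α.length = n)
    (hneck : IsNecklace α)
    (hA : lastone α ∈ A n) (hper : IsPeriodic (lastone α)) : False := by
  classical
  obtain ⟨hβlen, hβneck, hβasym⟩ := hA
  obtain ⟨γ, j, hj, hγ⟩ := hper
  set w : List Bool := α.dropLast ++ [false] with hw
  have hwlen : w.length = n := by
    rw [hw, List.length_append, List.length_dropLast, hlen]
    simp
    omega
  obtain ⟨k, hk⟩ := neckOf_is_rotate w
  have hlast : lastone α = neckOf w := rfl
  rw [hlast, hk] at hβlen hβasym hγ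
  set m := γ.length with hm
  have hnm : n = j * m := by
    have h := congrArg List.length hγ
    rw [listPow_length, List.length_rotate, hwlen, ← hm] at h
    omega
  have hm1 : 1 ≤ m := by
    rcases Nat.eq_zero_or_pos m with h | h
    · rw [h, Nat.mul_zero] at hnm; omega
    · exact h
  have h2m : 2 * m ≤ n := by rw [hnm]; exact Nat.mul_le_mul_right m hj
  have hdvd : m ∣ n := ⟨j, by rw [hnm, Nat.mul_comm]⟩
  have hwget : ∀ i, i < n - 1 → w.getD i false = α.getD i false := by
    intro i hi
    have hb1 : i < α.dropLast.length := by
      rw [List.length_dropLast, hlen]; omega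
    rw [hw, List.getD_append _ _ _ _ hb1, List.getD_eq_getElem _ _ hb1,
        List.getD_eq_getElem _ false (show i < α.length by rw [hlen]; omega),
        List.getElem_dropLast]
  have hwlast : w.getD (n-1) false = false := by
    have hb : α.dropLast.length ≤ n - 1 := by rw [List.length_dropLast, hlen]
    rw [hw, List.getD_append_right _ _ _ _ hb, List.length_dropLast, hlen]
    have : n - 1 - (n - 1) = 0 := by omega
    rw [this]
    rfl
  have hβmod : ∀ i, i < n → (w.rotate k).getD i false = (w.rotate k).getD (i % m) false :=
    fun i hi => pow_mod hγ i (by rw [List.length_rotate, hwlen]; omega)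
  obtain ⟨k', hk'⟩ := (List.IsRotated.symm ⟨k, rfl⟩ : (w.rotate k).IsRotated w)
  have hrlen : (w.rotate k).length = n := by rw [List.length_rotate, hwlen]
  have hwmod : ∀ i, i < n → w.getD i false = w.getD (i % m) false := by
    intro i hi
    have him : i % m < n := by
      have := Nat.mod_lt i (show 0 < m by omega); omega
    have e1 : w.getD i false = (w.rotate k).getD ((i + k') % n) false := by
      conv_lhs => rw [← hk']
      rw [getD_rotate _ _ _ (by rw [hrlen]; omega), hrlen]
    have e2 : w.getD (i % m) false = (w.rotate k).getD ((i % m + k') % n) false := by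
      conv_lhs => rw [← hk']
      rw [getD_rotate _ _ _ (by rw [hrlen]; omega), hrlen]
    rw [e1, e2, hβmod ((i + k') % n) (Nat.mod_lt _ (by omega)),
      hβmod ((i % m + k') % n) (Nat.mod_lt _ (by omega))]
    congr 1
    rw [Nat.mod_mod_of_dvd _ hdvd, Nat.mod_mod_of_dvd _ hdvd, Nat.add_mod i k' m,
      Nat.add_mod (i % m) k' m, Nat.mod_mod_of_dvd i (dvd_refl m)]
  obtain ⟨i0, hi0, hi0v⟩ := exists_getD_eq (α := w.rotate k) true
    (by simpa using asym_ne_replicate hβasym false)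
  rw [hrlen] at hi0
  have hex : ∃ a, a < m ∧ w.getD a false = true := by
    rw [getD_rotate _ _ _ (by omega), hwlen] at hi0v
    have hb : (i0 + k) % n < n := Nat.mod_lt _ (by omega)
    refine ⟨((i0 + k) % n) % m, Nat.mod_lt _ (by omega), ?_⟩
    rw [← hwmod _ hb]
    exact hi0v
  have ham : Nat.find hex < m := (Nat.find_spec hex).1
  have hav : w.getD (Nat.find hex) false = true := (Nat.find_spec hex).2
  set a := Nat.find hex with ha
  have hamin : ∀ i, i < a → w.getD i false = false := by
    intro i hia
    rw [ha] at hia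
    have hmin := Nat.find_min hex hia
    push_neg at hmin
    rcases Bool.eq_false_or_eq_true (w.getD i false) with h | h
    · exact absurd h (hmin (by omega))
    · exact h
  have hnm1 : (n - 1) % m = m - 1 := by
    obtain ⟨t, ht⟩ := hdvd
    have ht1 : 1 ≤ t := by
      rcases Nat.eq_zero_or_pos t with h | h
      · rw [h, Nat.mul_zero] at ht; omega
      · exact h
    obtain ⟨t', rfl⟩ : ∃ t', t = t' + 1 := ⟨t - 1, by omega⟩
    have he : n - 1 = m * t' + (m - 1) := by rw [ht, Nat.mul_succ]; omega
    rw [he, Nat.mul_add_mod, Nat.mod_eq_of_lt (by omega)]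
  have hwm1 : w.getD (m-1) false = false := by
    have h := hwmod (n-1) (by omega)
    rw [hwlast, hnm1] at h
    exact h.symm
  have ham1 : a ≠ m - 1 := by
    intro h
    rw [h, hwm1] at hav
    exact absurd hav (by simp)
  refine neck_absurd hneck (k := m - 1) ?_
  have key : ∀ i, i ≤ a → (α.rotate (m-1)).getD i false = false := by
    intro i hi
    rw [getD_rotate _ _ _ (by omega), hlen, Nat.mod_eq_of_lt (by omega),
      ← hwget _ (by omega), hwmod _ (by omega)]
    rcases Nat.eq_zero_or_pos i with h0 | h0
    · subst h0
      rw [Nat.zero_add, Nat.mod_eq_of_lt (by omega)]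
      exact hwm1
    · have he : i + (m-1) = (i-1) + m := by omega
      rw [he, Nat.add_mod_right, Nat.mod_eq_of_lt (by omega)]
      exact hamin (i-1) (by omega)
  refine lex_lt_at a (α.rotate (m-1)) α (by rw [List.length_rotate]; omega) (by omega) ?_
    (key a le_rfl) ?_
  · intro i hi
    rw [key i (by omega), ← hwget i (by omega)]
    exact (hamin i hi).symm
  · rw [← hwget a (by omega)]
    exact hav

-- ==== Case 3: parent = lastzero ====

private lemma caseC {n : ℕ} (hn : 6 ≤ n) {α : List Bool} (hlen : α.length = n)
    (hneck : IsNecklace α) (hasym : ∀ k, α < α.reverse.rotate k)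
    (hper : IsPeriodic (lastzero α)) : False := by
  classical
  obtain ⟨γ, j, hj, hγ⟩ := hper
  set m := γ.length with hm
  obtain ⟨i1, hi1, hi1v⟩ := exists_getD_eq (α := α) false
    (by simpa using asym_ne_replicate hasym true)
  have hmem : false ∈ α.reverse := by
    rw [List.mem_reverse]
    rw [List.getD_eq_getElem _ _ hi1] at hi1v
    exact hi1v ▸ List.getElem_mem hi1
  obtain ⟨s, hs, hpre, hsv, heq⟩ := flipFirst_spec false α.reverse hmem
  rw [List.length_reverse, hlen] at hs
  have hβ : lastzero α = (α.reverse.set s true).reverse := by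
    unfold lastzero
    rw [heq]
    rfl
  rw [hβ] at hγ
  set p := n - 1 - s with hp
  have hnm : n = j * m := by
    have h := congrArg List.length hγ
    rw [listPow_length, List.length_reverse, List.length_set, List.length_reverse, hlen,
      ← hm] at h
    omega
  have hm1 : 1 ≤ m := by
    rcases Nat.eq_zero_or_pos m with h | h
    · rw [h, Nat.mul_zero] at hnm; omega
    · exact h
  have h2m : 2 * m ≤ n := by rw [hnm]; exact Nat.mul_le_mul_right m hj
  have hβget : ∀ i, i < n → ((α.reverse.set s true).reverse).getD i false
      = if i = p then true else α.getD i false := by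
    intro i hi
    rw [getD_reverse _ _ (by rw [List.length_set, List.length_reverse, hlen]; omega)]
    have e1 : (α.reverse.set s true).length - 1 - i = n - 1 - i := by
      rw [List.length_set, List.length_reverse, hlen]
    rw [e1, getD_set _ _ _ _ (by rw [List.length_reverse, hlen]; omega)]
    by_cases hip : i = p
    · rw [if_pos (by omega), if_pos hip]
    · rw [if_neg (by omega), if_neg hip, getD_reverse _ _ (by rw [hlen]; omega)]
      have e2 : α.length - 1 - (n - 1 - i) = i := by rw [hlen]; omega
      rw [e2]
  have hβmod : ∀ i, i < n → ((α.reverse.set s true).reverse).getD i false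
      = ((α.reverse.set s true).reverse).getD (i % m) false :=
    fun i hi => pow_mod hγ i
      (by rw [List.length_reverse, List.length_set, List.length_reverse, hlen]; omega)
  have hsα : s < α.length := by omega
  have hpv : α.getD p false = false := by
    have h := hsv
    rw [getD_reverse α s hsα, hlen] at h
    rw [hp]
    exact h
  have hafter : ∀ i, p < i → i < n → α.getD i false = true := by
    intro i hpi hin
    have h := hpre (n - 1 - i) (by omega)
    rw [getD_reverse α (n-1-i) (by omega), hlen] at h
    have e : n - 1 - (n - 1 - i) = i := by omega
    rw [e] at h
    simpa using h
  have h0 : α.getD 0 false = false := necklace_head_false hneck hi1 hi1v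
  have hp1 : 1 ≤ p := by
    by_contra hp0
    push_neg at hp0
    have hαeq : α = false :: List.replicate (n-1) true := by
      apply List.ext_getElem (by simp [hlen]; omega)
      intro i h1 h2
      rw [← List.getD_eq_getElem _ false h1]
      cases i with
      | zero => rw [h0]; rfl
      | succ i =>
        rw [hafter (i+1) (by omega) (by rw [hlen] at h1; omega)]
        simp
    have hrev : α.reverse = List.replicate (n-1) true ++ [false] := by
      rw [hαeq, List.reverse_cons, List.reverse_replicate]
    have hrot : α.reverse.rotate (n-1) = α := by
      rw [hrev, List.rotate_eq_drop_append_take (by simp),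
        List.drop_left' (by simp), List.take_left' (by simp), hαeq]
      rfl
    have h := hasym (n-1)
    rw [hrot] at h
    exact lt_irrefl _ h
  by_cases hpm : p < m
  · have hmn : m < n := by omega
    have h1 : ((α.reverse.set s true).reverse).getD m false = α.getD m false := by
      rw [hβget m hmn, if_neg (by omega)]
    have h2 : ((α.reverse.set s true).reverse).getD 0 false = α.getD 0 false := by
      rw [hβget 0 (by omega), if_neg (by omega)]
    have h3 := hβmod m hmn
    rw [Nat.mod_self, h1, h2] at h3
    rw [hafter m (by omega) hmn, h0] at h3
    exact absurd h3 (by simp)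
  · push_neg at hpm
    have hppos : p < n := by omega
    have hrm : p % m < m := Nat.mod_lt _ (by omega)
    have hpr : p - p % m = m * (p / m) := by
      have := Nat.div_add_mod p m
      omega
    refine neck_absurd hneck (k := p - p % m) ?_
    have hβp : ((α.reverse.set s true).reverse).getD p false = true := by
      rw [hβget p hppos, if_pos rfl]
    have hβr : ((α.reverse.set s true).reverse).getD (p % m) false = true := by
      rw [← hβmod p hppos]
      exact hβp
    have hαr : α.getD (p % m) false = true := by
      have h := hβr
      rw [hβget _ (by omega), if_neg (by omega)] at h
      exact h
    refine lex_lt_at (p % m) (α.rotate (p - p % m)) α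
      (by rw [List.length_rotate]; omega) (by omega) ?_ ?_ hαr
    · intro i hi
      rw [getD_rotate _ _ _ (by omega), hlen, Nat.mod_eq_of_lt (by omega)]
      have hlt : i + (p - p % m) < n := by omega
      have e1 : α.getD (i + (p - p % m)) false
          = ((α.reverse.set s true).reverse).getD (i + (p - p % m)) false := by
        rw [hβget _ hlt, if_neg (by omega)]
      rw [e1, hβmod _ hlt]
      have e2 : (i + (p - p % m)) % m = i := by
        rw [hpr, Nat.add_mul_mod_self_left]
        exact Nat.mod_eq_of_lt (by omega)
      rw [e2, hβget i (by omega), if_neg (by omega)]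
    · rw [getD_rotate _ _ _ (by omega), hlen, Nat.mod_eq_of_lt (by omega)]
      have e : p % m + (p - p % m) = p := by omega
      rw [e]
      exact hpv


/-- For `n ≥ 6` and every `α ∈ A n` with `α ≠ rootStr n`, the string
`parentStr n α` is aperiodic. -/
theorem parent_aperiodic (n : ℕ) (hn : 6 ≤ n) (α : List Bool) (hα : α ∈ A n)
    (hne : α ≠ rootStr n) :
    ¬ IsPeriodic (parentStr n α) := by
  obtain ⟨hlen, hneck, hasym⟩ := hα
  intro hper
  unfold parentStr at hper
  split at hper
  next h1 => exact caseA hn hlen hneck hasym h1 hper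
  next h1 =>
    split at hper
    next h2 => exact caseB hn hlen hneck h2 hper
    next h2 => exact caseC hn hlen hneck hasym hper
end

section
/- For every n ≥ 1, n·|A(n)| ≤ 2·L_n, where L_n = Σ_{α ∈ A(n)} |ap(α)|. -/
namespace OSAux

/-- value of a list at an index, default `false`. -/
def D (l : List Bool) (i : ℕ) : Bool := l.getD i false

lemma D_eq_getElem (l : List Bool) {i : ℕ} (h : i < l.length) : D l i = l[i] :=
  List.getD_eq_getElem l false h

lemma ext_D {x y : List Bool} (h : x.length = y.length)
    (h2 : ∀ i < x.length, D x i = D y i) : x = y := by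
  refine List.ext_getElem h fun i h1 h2' => ?_
  rw [← D_eq_getElem x h1, ← D_eq_getElem y h2', h2 i h1]

lemma D_cons_zero (a : Bool) (l : List Bool) : D (a :: l) 0 = a := rfl
lemma D_cons_succ (a : Bool) (l : List Bool) (i : ℕ) : D (a :: l) (i+1) = D l i := rfl

lemma D_rotate (l : List Bool) (k i : ℕ) (h : i < l.length) :
    D (l.rotate k) i = D l ((i + k) % l.length) := by
  have h1 : i < (l.rotate k).length := by rwa [List.length_rotate]
  have h2 : (i + k) % l.length < l.length := Nat.mod_lt _ (by omega)
  rw [D_eq_getElem _ h1, D_eq_getElem _ h2, List.getElem_rotate]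

lemma D_reverse (l : List Bool) (i : ℕ) (h : i < l.length) :
    D l.reverse i = D l (l.length - 1 - i) := by
  have h1 : i < l.reverse.length := by rwa [List.length_reverse]
  have h2 : l.length - 1 - i < l.length := by omega
  rw [D_eq_getElem _ h1, D_eq_getElem _ h2, List.getElem_reverse]

lemma D_set {l : List Bool} {m i : ℕ} {a : Bool} (h : i < l.length) :
    D (l.set m a) i = if m = i then a else D l i := by
  have h1 : i < (l.set m a).length := by rwa [List.length_set]
  rw [D_eq_getElem _ h1, List.getElem_set]
  split
  · rfl
  · rw [D_eq_getElem _ h]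

/-- first-difference characterization of `<` for equal-length boolean lists. -/
lemma lex_iff : ∀ (x y : List Bool), x.length = y.length →
    (List.Lex (·<·) x y ↔ ∃ m, m < x.length ∧ (∀ i < m, D x i = D y i) ∧
      D x m = false ∧ D y m = true) := by
  intro x
  induction x with
  | nil => intro y h
           have : y = [] := List.eq_nil_of_length_eq_zero h.symm
           subst this
           simp only [List.length_nil]
           constructor
           · intro h'; cases h'
           · rintro ⟨m, hm, -⟩; omega
  | cons a xs ih =>
    intro y h
    cases y with
    | nil => simp at h
    | cons b ys =>
      have hlen : xs.length = ys.length := by simpa using h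
      cases a <;> cases b
      · -- false false : same head
        rw [List.lex_cons_iff, ih ys hlen]
        constructor
        · rintro ⟨m, hm, hpre, hx, hy⟩
          exact ⟨m+1, by simpa using Nat.succ_lt_succ hm,
            fun i hi => by cases i with
              | zero => rfl
              | succ j => simpa [D_cons_succ] using hpre j (by omega), hx, hy⟩
        · rintro ⟨m, hm, hpre, hx, hy⟩
          cases m with
          | zero => simp [D_cons_zero] at hx hy
          | succ j =>
            exact ⟨j, by simpa using hm, fun i hi => hpre (i+1) (by omega), hx, hy⟩
      · -- false true : immediate
        constructor
        · intro _; exact ⟨0, by simp, by omega, rfl, rfl⟩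
        · intro _; exact List.Lex.rel (by decide)
      · -- true false : neither
        constructor
        · intro h'
          cases h' with
          | rel hr => exact absurd hr (by decide)
        · rintro ⟨m, hm, hpre, hx, hy⟩
          cases m with
          | zero => simp [D_cons_zero] at hx
          | succ j => have := hpre 0 (by omega); simp [D_cons_zero] at this
      · -- true true : same head
        rw [List.lex_cons_iff, ih ys hlen]
        constructor
        · rintro ⟨m, hm, hpre, hx, hy⟩
          exact ⟨m+1, by simpa using Nat.succ_lt_succ hm,
            fun i hi => by cases i with
              | zero => rfl
              | succ j => simpa [D_cons_succ] using hpre j (by omega), hx, hy⟩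
        · rintro ⟨m, hm, hpre, hx, hy⟩
          cases m with
          | zero => simp [D_cons_zero] at hx
          | succ j =>
            exact ⟨j, by simpa using hm, fun i hi => hpre (i+1) (by omega), hx, hy⟩

lemma lt_iff {x y : List Bool} (h : x.length = y.length) :
    x < y ↔ ∃ m, m < x.length ∧ (∀ i < m, D x i = D y i) ∧
      D x m = false ∧ D y m = true := lex_iff x y h

lemma listPow_zero (γ : List Bool) : listPow γ 0 = [] := rfl
lemma listPow_succ (γ : List Bool) (t : ℕ) : listPow γ (t+1) = γ ++ listPow γ t := by
  simp [listPow, List.replicate_succ]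

lemma listPow_length (γ : List Bool) (t : ℕ) : (listPow γ t).length = t * γ.length := by
  induction t with
  | zero => simp [listPow_zero]
  | succ s ih => rw [listPow_succ]; simp [ih]; ring

lemma D_listPow (γ : List Bool) (hp : γ.length ≠ 0) (t i : ℕ) (h : i < t * γ.length) :
    D (listPow γ t) i = D γ (i % γ.length) := by
  induction t generalizing i with
  | zero => omega
  | succ s ih =>
    have hsplit : (s+1) * γ.length = γ.length + s * γ.length := by ring
    rw [listPow_succ]
    by_cases hi : i < γ.length
    · rw [Nat.mod_eq_of_lt hi]
      have h1 : i < (γ ++ listPow γ s).length := by simp [listPow_length]; omega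
      rw [D_eq_getElem _ h1, D_eq_getElem _ hi]
      exact List.getElem_append_left hi
    · push_neg at hi
      have h1 : i < (γ ++ listPow γ s).length := by simp [listPow_length]; omega
      have h2 : i - γ.length < (listPow γ s).length := by simp [listPow_length]; omega
      rw [D_eq_getElem _ h1, List.getElem_append_right hi, ← D_eq_getElem _ h2,
        ih (i - γ.length) (by omega), Nat.mod_eq_sub_mod hi]

/-- the minimal period. -/
noncomputable def pp (α : List Bool) : ℕ :=
  sInf {p | ∃ γ : List Bool, γ.length = p ∧ ∃ t : ℕ, listPow γ t = α}

lemma self_mem_perSet (α : List Bool) :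
    α.length ∈ {p | ∃ γ : List Bool, γ.length = p ∧ ∃ t : ℕ, listPow γ t = α} :=
  ⟨α, rfl, 1, by simp [listPow]⟩

lemma pp_le (α : List Bool) : pp α ≤ α.length := Nat.sInf_le (self_mem_perSet α)

lemma pp_spec (α : List Bool) : ∃ γ : List Bool, γ.length = pp α ∧ ∃ t : ℕ, listPow γ t = α :=
  Nat.sInf_mem (Set.nonempty_of_mem (self_mem_perSet α))

lemma pp_min {α : List Bool} {q : ℕ}
    (h : ∃ γ : List Bool, γ.length = q ∧ ∃ t : ℕ, listPow γ t = α) : pp α ≤ q :=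
  Nat.sInf_le h

lemma pp_pos {α : List Bool} (h : α.length ≠ 0) : 0 < pp α := by
  rcases pp_spec α with ⟨γ, hγ, t, ht⟩
  rcases Nat.eq_zero_or_pos (pp α) with h0 | h0
  · exfalso
    have : γ.length = 0 := by rw [hγ, h0]
    have hγnil : γ = [] := List.eq_nil_of_length_eq_zero this
    subst hγnil
    have : (listPow [] t).length = 0 := by simp [listPow_length]
    rw [ht] at this; exact h this
  · exact h0

lemma pp_exists_t {α : List Bool} : ∃ t : ℕ, t * pp α = α.length := by
  rcases pp_spec α with ⟨γ, hγ, t, ht⟩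
  exact ⟨t, by rw [← hγ, ← listPow_length, ht]⟩

lemma pp_dvd (α : List Bool) : pp α ∣ α.length := by
  rcases pp_exists_t (α := α) with ⟨t, ht⟩; exact ⟨t, by rw [← ht, Nat.mul_comm]⟩

lemma D_pp_period {α : List Bool} (h : α.length ≠ 0) :
    ∀ i < α.length, D α i = D α (i % pp α) := by
  intro i hi
  rcases pp_spec α with ⟨γ, hγ, t, ht⟩
  have hp0 : γ.length ≠ 0 := by rw [hγ]; have := pp_pos h; omega
  have hlen : t * γ.length = α.length := by rw [← listPow_length, ht]
  have h1 := D_listPow γ hp0 t i (by omega)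
  have h2 := D_listPow γ hp0 t (i % γ.length) (by
    have : i % γ.length < γ.length := Nat.mod_lt _ (by omega)
    have ht1 : 1 ≤ t := by by_contra hc; push_neg at hc; interval_cases t <;> omega
    calc i % γ.length < γ.length := this
      _ ≤ t * γ.length := Nat.le_mul_of_pos_left _ ht1
  )
  rw [ht] at h1 h2
  rw [hγ] at h1 h2
  rw [h1, h2, Nat.mod_mod_of_dvd _ (dvd_refl _)]

lemma mem_perSet_of_period {α : List Bool} {g : ℕ} (hg0 : 0 < g) (hg : g ∣ α.length)
    (h : ∀ i < α.length, D α i = D α (i % g)) :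
    ∃ γ : List Bool, γ.length = g ∧ ∃ t : ℕ, listPow γ t = α := by
  have hgle : g ≤ α.length ∨ α.length = 0 := by
    rcases Nat.eq_zero_or_pos α.length with h0 | h0
    · exact Or.inr h0
    · exact Or.inl (Nat.le_of_dvd h0 hg)
  rcases hgle with hgle | h0
  · refine ⟨α.take g, by simp [hgle], α.length / g, ?_⟩
    apply ext_D
    · simp [listPow_length, Nat.div_mul_cancel hg, hgle]
    · intro i hi
      have hlen : (listPow (α.take g) (α.length / g)).length = α.length := by
        simp [listPow_length, Nat.div_mul_cancel hg, hgle]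
      rw [hlen] at hi
      have htk : (α.take g).length = g := by simp [hgle]
      have h1 : D (listPow (α.take g) (α.length / g)) i = D (α.take g) (i % g) := by
        have := D_listPow (α.take g) (by omega) (α.length / g) i
          (by rw [htk, Nat.div_mul_cancel hg]; exact hi)
        rwa [htk] at this
      rw [h1]
      have himod : i % g < g := Nat.mod_lt _ hg0
      have h2 : D (α.take g) (i % g) = D α (i % g) := by
        have hlt : i % g < α.length := by omega
        rw [D_eq_getElem _ (by rwa [htk]), D_eq_getElem _ hlt, List.getElem_take]
      rw [h2, ← h i hi]
  · refine ⟨List.replicate g false, by simp, 0, ?_⟩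
    have : α = [] := List.eq_nil_of_length_eq_zero h0
    simp [this, listPow_zero]

/-! ### good shifts -/

def GoodF (N : ℕ) (v : ℕ → Bool) (s : ℕ) : Prop := ∀ i < N, v ((i + s) % N) = v i

lemma goodF_self (N : ℕ) (v : ℕ → Bool) : GoodF N v N := by
  intro i hi; rw [Nat.add_mod_right, Nat.mod_eq_of_lt hi]

lemma goodF_zero (N : ℕ) (v : ℕ → Bool) : GoodF N v 0 := by
  intro i hi; rw [Nat.add_zero, Nat.mod_eq_of_lt hi]

lemma goodF_add {N : ℕ} {v : ℕ → Bool} {a b : ℕ} (ha : GoodF N v a) (hb : GoodF N v b) :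
    GoodF N v (a + b) := by
  intro i hi
  have h1 : (i + (a + b)) % N = ((i + a) % N + b) % N := by
    rw [Nat.mod_add_mod]; ring_nf
  rw [h1, hb _ (Nat.mod_lt _ (by omega)), ha _ hi]

lemma goodF_mul {N : ℕ} {v : ℕ → Bool} {a : ℕ} (m : ℕ) (ha : GoodF N v a) :
    GoodF N v (m * a) := by
  induction m with
  | zero => simpa using goodF_zero N v
  | succ s ih => have := goodF_add ih ha; rwa [Nat.succ_mul]

lemma goodF_cancel {N : ℕ} {v : ℕ → Bool} {a c : ℕ} (ha : GoodF N v a)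
    (hac : GoodF N v (a + c)) : GoodF N v c := by
  intro i hi
  have h1 := ha ((i + c) % N) (Nat.mod_lt _ (by omega))
  have h2 : ((i + c) % N + a) % N = (i + (a + c)) % N := by
    rw [Nat.mod_add_mod]; ring_nf
  rw [h2, hac _ hi] at h1
  exact h1.symm

lemma goodF_gcd {N : ℕ} {v : ℕ → Bool} : ∀ (a b : ℕ), GoodF N v a → GoodF N v b →
    GoodF N v (Nat.gcd a b) := by
  intro a
  induction a using Nat.strong_induction_on with
  | _ a ih =>
    intro b ha hb
    rcases Nat.eq_zero_or_pos a with h0 | h0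
    · subst h0; simpa using hb
    · rw [Nat.gcd_rec a b]
      apply ih (b % a) (Nat.mod_lt _ h0) _ _ ha
      have h1 : GoodF N v (a * (b / a)) := by
        have := goodF_mul (b / a) ha; rwa [Nat.mul_comm] at this
      have h2 : GoodF N v (a * (b / a) + b % a) := by
        rw [Nat.div_add_mod]; exact hb
      exact goodF_cancel h1 h2

lemma periodF_of_goodF {N g : ℕ} {v : ℕ → Bool} (hg0 : 0 < g)
    (hgood : GoodF N v g) : ∀ i < N, v i = v (i % g) := by
  intro i
  induction i using Nat.strong_induction_on with
  | _ i ih =>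
    intro hi
    by_cases hig : i < g
    · rw [Nat.mod_eq_of_lt hig]
    · push_neg at hig
      have h1 := hgood (i - g) (by omega)
      have h2 : (i - g + g) % N = i := by
        rw [Nat.sub_add_cancel hig, Nat.mod_eq_of_lt hi]
      rw [h2] at h1
      rw [h1, ih (i - g) (by omega) (by omega), ← Nat.mod_eq_sub_mod hig]

lemma flipFirst_eq_set (b : Bool) : ∀ (l : List Bool) (j : ℕ), j < l.length →
    D l j = b → (∀ i < j, D l i ≠ b) → flipFirst b l = l.set j (!b) := by
  intro l
  induction l with
  | nil => intro j hj; simp at hj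
  | cons a tl ih =>
    intro j hj hb hpre
    cases j with
    | zero =>
      rw [D_cons_zero] at hb
      subst hb
      simp [flipFirst]
    | succ j' =>
      have ha : a ≠ b := by
        have := hpre 0 (Nat.succ_pos _)
        rwa [D_cons_zero] at this
      rw [D_cons_succ] at hb
      simp only [flipFirst, if_neg ha, List.set]
      rw [ih j' (by simpa using hj) hb (fun i hi => by
        have := hpre (i+1) (by omega)
        rwa [D_cons_succ] at this)]

lemma lastzero_eq_set {α : List Bool} {n f : ℕ} (hlen : α.length = n) (hf : f < n)
    (hfv : D α f = false) (hfmax : ∀ i, f < i → i < n → D α i = true) :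
    lastzero α = α.set f true := by
  have hrevlen : α.reverse.length = n := by simp [hlen]
  set j := n - 1 - f with hj
  have hjn : j < n := by omega
  have h1 : D α.reverse j = false := by
    rw [D_reverse _ _ (by omega), hlen]
    have : n - 1 - j = f := by omega
    rw [this, hfv]
  have h2 : ∀ i < j, D α.reverse i ≠ false := by
    intro i hi
    rw [D_reverse _ _ (by rw [hlen]; omega), hlen]
    have h3 : f < n - 1 - i := by omega
    rw [hfmax _ h3 (by omega)]
    simp
  have h4 : flipFirst false α.reverse = α.reverse.set j true := by
    have := flipFirst_eq_set false α.reverse j (by omega) h1 h2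
    simpa using this
  rw [lastzero, h4]
  apply ext_D
  · simp [hlen]
  · intro i hi
    simp only [List.length_reverse, List.length_set] at hi
    rw [hlen] at hi
    have hi1 : i < (α.reverse.set j true).length := by simp [hlen]; omega
    have hi2 : i < (α.set f true).length := by simp [hlen]; omega
    rw [D_reverse _ _ hi1]
    have hlen2 : (α.reverse.set j true).length = n := by simp [hlen]
    rw [hlen2]
    rw [D_set (by rw [hrevlen]; omega : n - 1 - i < α.reverse.length)]
    rw [D_set (by rw [hlen]; omega : i < α.length)]
    by_cases hif : i = f
    · subst hif
      rw [if_pos (by omega : j = n - 1 - i), if_pos rfl]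
    · have hne1 : ¬ (j = n - 1 - i) := by omega
      have hne2 : ¬ (f = i) := fun h => hif h.symm
      rw [if_neg hne1, if_neg hne2]
      rw [D_reverse _ _ (by rw [hlen]; omega), hlen]
      congr 1
      omega

lemma mem_A_exists_false {α : List Bool} {n : ℕ} (hn : 1 ≤ n) (hA : α ∈ A n) :
    ∃ i < n, D α i = false := by
  by_contra hc
  push_neg at hc
  obtain ⟨hlen, hneck, hasym⟩ := hA
  have h1 : α.reverse.rotate 0 = α.reverse := List.rotate_zero _
  have h2 := hasym 0
  rw [h1] at h2
  have h3 : α.reverse = α := by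
    apply ext_D (by simp)
    intro i hi
    simp only [List.length_reverse] at hi
    rw [D_reverse _ _ hi, hlen]
    have := hc i (by omega)
    have h4 := hc (n - 1 - i) (by omega)
    rw [hlen] at hi
    simp only [Bool.not_eq_false] at this h4
    rw [this, h4]
  rw [h3] at h2
  exact absurd h2 (lt_irrefl _)


lemma two_mul_pp_le {α : List Bool} {n : ℕ} (hlen : α.length = n) (hn : 1 ≤ n)
    (hper : pp α < n) : 2 * pp α ≤ n := by
  obtain ⟨t, ht⟩ := pp_dvd α
  rw [hlen] at ht
  have hp0 : 0 < pp α := pp_pos (by omega)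
  have ht2 : 2 ≤ t := by
    by_contra hc
    push_neg at hc
    interval_cases t <;> omega
  calc 2 * pp α ≤ t * pp α := Nat.mul_le_mul_right _ ht2
    _ = n := by rw [ht]; ring

lemma Dper {α : List Bool} {n : ℕ} (hlen : α.length = n) (hn : 1 ≤ n) :
    ∀ i < n, D α i = D α (i % pp α) := by
  rw [← hlen]; exact D_pp_period (by omega)

/-- basic data about the last `false` of a member of `A n`. -/
lemma lastfalse_setup {α : List Bool} {n : ℕ} (hn : 1 ≤ n) (hA : α ∈ A n)
    (hper : pp α < n) :
    ∃ f, f < n ∧ n - pp α ≤ f ∧ D α f = false ∧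
      (∀ i, f < i → i < n → D α i = true) ∧ lastzero α = α.set f true := by
  have hlen : α.length = n := hA.1
  have hp0 : 0 < pp α := pp_pos (by rw [hlen]; omega)
  have h2p : 2 * pp α ≤ n := two_mul_pp_le hlen hn hper
  have hDper := Dper hlen hn
  have hpdvd : pp α ∣ n := hlen ▸ pp_dvd α
  obtain ⟨w0, hw0n, hw0⟩ := mem_A_exists_false hn hA
  classical
  have hex : ∃ f, f ≤ n - 1 ∧ D α f = false ∧ (∀ i, f < i → i < n → D α i = true) ∧
      (∀ w, w < n → D α w = false → w ≤ f) := by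
    refine ⟨Nat.findGreatest (fun i => D α i = false) (n-1), Nat.findGreatest_le _,
      ?_, ?_, ?_⟩
    · exact Nat.findGreatest_spec (P := fun i => D α i = false) (n := n - 1) (m := w0) (by omega) hw0
    · intro i hi1 hi2
      have := Nat.findGreatest_is_greatest hi1 (by omega)
      simpa using this
    · intro w hw hwf
      exact Nat.le_findGreatest (by omega) hwf
  obtain ⟨f, hf_le, hf_false, hf_max, hf_wit⟩ := hex
  have hf_ge : n - pp α ≤ f := by
    have hmo : f % pp α < pp α := Nat.mod_lt _ hp0
    have hwlt : f % pp α + (n - pp α) < n := by omega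
    have hw : D α (f % pp α + (n - pp α)) = false := by
      rw [hDper _ hwlt]
      have he : (f % pp α + (n - pp α)) % pp α = f % pp α := by
        obtain ⟨c, hc⟩ := Nat.dvd_sub hpdvd (dvd_refl (pp α))
        rw [hc, Nat.add_mul_mod_self_left, Nat.mod_mod_of_dvd _ (dvd_refl _)]
      rw [he, ← hDper f (by omega), hf_false]
    have := hf_wit _ hwlt hw
    omega
  exact ⟨f, by omega, hf_ge, hf_false, hf_max,
    lastzero_eq_set hlen (by omega) hf_false hf_max⟩

/-- Main lemma: flipping the last zero of a periodic asymmetric bracelet yields an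
aperiodic asymmetric bracelet. -/
lemma lastzero_main {α : List Bool} {n : ℕ} (hn : 1 ≤ n) (hA : α ∈ A n)
    (hper : pp α < n) : lastzero α ∈ A n ∧ pp (lastzero α) = n := by
  obtain ⟨f, hf_lt, hf_ge0, hf_false, hf_max, hβeq⟩ := lastfalse_setup hn hA hper
  obtain ⟨hlen, hneck, hasym⟩ := hA
  obtain ⟨p, hpdef⟩ : ∃ q, q = pp α := ⟨pp α, rfl⟩
  have hper' : p < n := by rw [hpdef]; exact hper
  have hf_ge : n - p ≤ f := by rw [hpdef]; exact hf_ge0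
  have hp0 : 0 < p := by rw [hpdef]; exact pp_pos (by rw [hlen]; omega)
  have h2p : 2 * p ≤ n := by rw [hpdef]; exact two_mul_pp_le hlen hn hper
  have hDper : ∀ i < n, D α i = D α (i % p) := by rw [hpdef]; exact Dper hlen hn
  have hpdvd : p ∣ n := by rw [hpdef]; exact hlen ▸ pp_dvd α
  have hpf : p ≤ f := by omega
  set β := α.set f true with hβdef
  have hβlen : β.length = n := by rw [hβdef, List.length_set, hlen]
  have hDβ : ∀ i < n, i ≠ f → D β i = D α i := by
    intro i hi hne
    rw [hβdef, D_set (by rw [hlen]; omega)]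
    rw [if_neg (fun h => hne h.symm)]
  have hDβf : D β f = true := by
    rw [hβdef, D_set (by rw [hlen]; omega), if_pos rfl]
  -- strictness of rotations of α
  have hstrict : ∀ k, k < n → k % p ≠ 0 → α < α.rotate k := by
    intro k hkn hkp
    refine lt_of_le_of_ne (hneck k) ?_
    intro heq
    have hgoodk : GoodF n (D α) k := by
      intro i hi
      have h1 := congrArg (fun l => D l i) heq
      rw [D_rotate α k i (by omega), hlen] at h1
      exact h1.symm
    have hgoodp : GoodF n (D α) p := by
      intro i hi
      rw [hDper _ (Nat.mod_lt _ (by omega)), Nat.mod_mod_of_dvd _ hpdvd,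
        Nat.add_mod_right, ← hDper i hi]
    have hgcd := goodF_gcd k p hgoodk hgoodp
    set g := Nat.gcd k p with hgdef
    have hg0 : 0 < g := Nat.gcd_pos_of_pos_right _ hp0
    have hgp : g ∣ p := Nat.gcd_dvd_right k p
    have hglt : g < p := by
      rcases lt_or_eq_of_le (Nat.le_of_dvd hp0 hgp) with h | h
      · exact h
      · exfalso
        apply hkp
        have hd : p ∣ k := h ▸ Nat.gcd_dvd_left k p
        obtain ⟨c, rfl⟩ := hd
        exact Nat.mul_mod_right p c
    have hperiod : ∀ i < α.length, D α i = D α (i % g) := by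
      rw [hlen]; exact periodF_of_goodF hg0 hgcd
    have hmem := mem_perSet_of_period hg0 (by rw [hlen]; exact hgp.trans hpdvd) hperiod
    have := pp_min hmem
    rw [← hpdef] at this
    omega
  -- strict rotations of β
  have strict_rot : ∀ k, 0 < k → k < n → β < β.rotate k := by
    intro k hk0 hkn
    rw [lt_iff (by rw [List.length_rotate])]
    rw [hβlen]
    by_cases hdvd : k % p = 0
    · -- p ∣ k
      have hkd : p ∣ k := Nat.dvd_of_mod_eq_zero hdvd
      have hkle : k ≤ n - p := by
        have hd1 : p ∣ n - k := Nat.dvd_sub hpdvd hkd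
        have := Nat.le_of_dvd (by omega) hd1
        omega
      have hkf : k ≤ f := by omega
      obtain ⟨c, hc⟩ := hkd
      refine ⟨f - k, by omega, ?_, ?_, ?_⟩
      · intro i hi
        rw [hDβ i (by omega) (by omega)]
        rw [D_rotate β k i (by rw [hβlen]; omega), hβlen,
          Nat.mod_eq_of_lt (by omega : i + k < n), hDβ _ (by omega) (by omega)]
        rw [hDper i (by omega), hDper (i+k) (by omega), hc,
          Nat.add_mul_mod_self_left]
      · rw [hDβ _ (by omega) (by omega)]
        rw [hDper _ (by omega)]
        have he : (f - k) % p = f % p := by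
          rw [hc]
          conv_rhs => rw [show f = (f - p * c) + p * c by omega]
          rw [Nat.add_mul_mod_self_left]
        rw [he, ← hDper f (by omega), hf_false]
      · rw [D_rotate β k _ (by rw [hβlen]; omega), hβlen,
          Nat.sub_add_cancel hkf, Nat.mod_eq_of_lt hf_lt, hDβf]
    · -- p ∤ k
      have hα := hstrict k hkn hdvd
      rw [lt_iff (by rw [List.length_rotate])] at hα
      rw [hlen] at hα
      obtain ⟨m, hmn, hpre, hxm, hym⟩ := hα
      have hrotred : ∀ i < n, D (α.rotate k) i = D α ((i + k) % p) := by
        intro i hi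
        rw [D_rotate α k i (by omega), hlen,
          hDper _ (Nat.mod_lt _ (by omega)), Nat.mod_mod_of_dvd _ hpdvd]
      have hmp : m < p := by
        by_contra hmge
        push_neg at hmge
        have hmpp : m % p < p := Nat.mod_lt _ hp0
        have e1 : D α m = D α (m % p) := hDper m (by omega)
        have e2 : D (α.rotate k) m = D (α.rotate k) (m % p) := by
          rw [hrotred m (by omega), hrotred (m % p) (by omega), Nat.mod_add_mod]
        have e3 := hpre (m % p) (by omega)
        rw [hxm] at e1
        rw [hym] at e2
        rw [← e1, ← e2] at e3
        exact absurd e3 (by simp)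
      set f' := (f + (n - k)) % n with hf'def
      have hf'n : f' < n := Nat.mod_lt _ (by omega)
      have hf'k : (f' + k) % n = f := by
        rw [hf'def, Nat.mod_add_mod, show f + (n - k) + k = f + n by omega,
          Nat.add_mod_right, Nat.mod_eq_of_lt hf_lt]
      have huniq : ∀ i < n, (i + k) % n = f → i = f' := by
        intro i hi hik
        have h1 : (i + k) % n = (f' + k) % n := by rw [hik, hf'k]
        have h2 := Nat.ModEq.add_right_cancel' k h1
        have h3 : i % n = f' % n := h2
        rwa [Nat.mod_eq_of_lt hi, Nat.mod_eq_of_lt hf'n] at h3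
      have hrotβ : ∀ i < n, i ≠ f' → D (β.rotate k) i = D (α.rotate k) i := by
        intro i hi hne
        rw [D_rotate β k i (by rw [hβlen]; omega), hβlen,
          D_rotate α k i (by rw [hlen]; omega), hlen]
        exact hDβ _ (Nat.mod_lt _ (by omega)) (fun hc => hne (huniq i hi hc))
      have hrotβf' : D (β.rotate k) f' = true := by
        rw [D_rotate β k f' (by rw [hβlen]; omega), hβlen, hf'k, hDβf]
      have hf'm : f' ≠ m := by
        intro h
        have hv : D (α.rotate k) f' = false := by
          rw [D_rotate α k f' (by rw [hlen]; omega), hlen, hf'k, hf_false]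
        rw [h, hym] at hv
        exact absurd hv (by simp)
      rcases lt_or_gt_of_ne hf'm with hltm | hgtm
      · refine ⟨f', by omega, ?_, ?_, hrotβf'⟩
        · intro i hi
          rw [hDβ i (by omega) (by omega), hrotβ i (by omega) (by omega)]
          exact hpre i (by omega)
        · rw [hDβ f' (by omega) (by omega)]
          rw [hpre f' hltm]
          rw [D_rotate α k f' (by rw [hlen]; omega), hlen, hf'k, hf_false]
      · refine ⟨m, by omega, ?_, ?_, ?_⟩
        · intro i hi
          rw [hDβ i (by omega) (by omega), hrotβ i (by omega) (by omega)]
          exact hpre i hi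
        · rw [hDβ m (by omega) (by omega)]; exact hxm
        · rw [hrotβ m (by omega) (by omega)]; exact hym
  -- β is a necklace
  have hneckβ : IsNecklace β := by
    intro k
    have h1 : β.rotate (k % n) = β.rotate k := by
      rw [← hβlen, List.rotate_mod]
    by_cases h0 : k % n = 0
    · rw [← h1, h0, List.rotate_zero]
    · rw [← h1]
      exact le_of_lt (strict_rot (k % n) (by omega) (Nat.mod_lt _ (by omega)))
  -- β is asymmetric
  have hasymβ : ∀ k : ℕ, β < β.reverse.rotate k := by
    intro k
    set k' := k % n with hk'def
    have hk'n : k' < n := Nat.mod_lt _ (by omega)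
    have hrevroteq : β.reverse.rotate k' = β.reverse.rotate k := by
      rw [← List.rotate_mod β.reverse k, List.length_reverse, hβlen]
    rw [← hrevroteq]
    have hρ := hasym k'
    rw [lt_iff (by rw [List.length_rotate, List.length_reverse])] at hρ
    rw [hlen] at hρ
    obtain ⟨m, hmn, hpre, hxm, hym⟩ := hρ
    have hρD : ∀ i < n, D (α.reverse.rotate k') i = D α (n - 1 - (i + k') % n) := by
      intro i hi
      rw [D_rotate α.reverse k' i (by rw [List.length_reverse, hlen]; omega),
        List.length_reverse, hlen,
        D_reverse α _ (by rw [hlen]; exact Nat.mod_lt _ (by omega)), hlen]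
    have hρred : ∀ i < n, D (α.reverse.rotate k') i = D (α.reverse.rotate k') (i % p) := by
      intro i hi
      have hipp : i % p < p := Nat.mod_lt _ hp0
      have hip : i % p < n := by omega
      rw [hρD i hi, hρD (i % p) hip]
      have hb1 : (i + k') % n < n := Nat.mod_lt _ (by omega)
      have hb2 : (i % p + k') % n < n := Nat.mod_lt _ (by omega)
      rw [hDper (n - 1 - (i + k') % n) (by omega), hDper (n - 1 - (i % p + k') % n) (by omega)]
      congr 1
      have hab : Nat.ModEq p ((i + k') % n) ((i % p + k') % n) := by
        unfold Nat.ModEq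
        rw [Nat.mod_mod_of_dvd _ hpdvd, Nat.mod_mod_of_dvd _ hpdvd, Nat.mod_add_mod]
      have h1 : (n - 1 - (i + k') % n) + (i + k') % n
          = (n - 1 - (i % p + k') % n) + (i % p + k') % n := by omega
      have h2 : Nat.ModEq p ((n - 1 - (i + k') % n) + (i + k') % n)
          ((n - 1 - (i % p + k') % n) + (i % p + k') % n) := by rw [h1]
      have h4 := Nat.ModEq.add_right_cancel hab h2
      exact h4
    have hmp : m < p := by
      by_contra hmge
      push_neg at hmge
      have hmpp : m % p < p := Nat.mod_lt _ hp0
      have e1 : D α m = D α (m % p) := hDper m (by omega)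
      have e2 := hρred m (by omega)
      have e3 := hpre (m % p) (by omega)
      rw [hxm] at e1
      rw [hym] at e2
      rw [← e1, ← e2] at e3
      exact absurd e3 (by simp)
    set frev := n - 1 - f with hfrevdef
    have hfrevn : frev < n := by omega
    have hβrevD : ∀ i < n, i ≠ frev → D β.reverse i = D α.reverse i := by
      intro i hi hne
      rw [D_reverse β i (by rw [hβlen]; omega), hβlen,
        D_reverse α i (by rw [hlen]; omega), hlen]
      exact hDβ _ (by omega) (by omega)
    have hβrevDf : D β.reverse frev = true := by
      rw [D_reverse β frev (by rw [hβlen]; omega), hβlen,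
        show n - 1 - frev = f by omega, hDβf]
    set f'' := (frev + (n - k')) % n with hf''def
    have hf''n : f'' < n := Nat.mod_lt _ (by omega)
    have hf''k : (f'' + k') % n = frev := by
      rw [hf''def, Nat.mod_add_mod, show frev + (n - k') + k' = frev + n by omega,
        Nat.add_mod_right, Nat.mod_eq_of_lt hfrevn]
    have huniq : ∀ i < n, (i + k') % n = frev → i = f'' := by
      intro i hi hik
      have h1 : (i + k') % n = (f'' + k') % n := by rw [hik, hf''k]
      have h2 := Nat.ModEq.add_right_cancel' k' h1
      have h3 : i % n = f'' % n := h2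
      rwa [Nat.mod_eq_of_lt hi, Nat.mod_eq_of_lt hf''n] at h3
    have hrotβrev : ∀ i < n, i ≠ f'' → D (β.reverse.rotate k') i = D (α.reverse.rotate k') i := by
      intro i hi hne
      rw [D_rotate β.reverse k' i (by rw [List.length_reverse, hβlen]; omega),
        List.length_reverse, hβlen,
        D_rotate α.reverse k' i (by rw [List.length_reverse, hlen]; omega),
        List.length_reverse, hlen]
      exact hβrevD _ (Nat.mod_lt _ (by omega)) (fun hc => hne (huniq i hi hc))
    have hrotβrevf'' : D (β.reverse.rotate k') f'' = true := by
      rw [D_rotate β.reverse k' f'' (by rw [List.length_reverse, hβlen]; omega),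
        List.length_reverse, hβlen, hf''k, hβrevDf]
    have hρf'' : D (α.reverse.rotate k') f'' = false := by
      rw [D_rotate α.reverse k' f'' (by rw [List.length_reverse, hlen]; omega),
        List.length_reverse, hlen, hf''k,
        D_reverse α frev (by rw [hlen]; omega), hlen,
        show n - 1 - frev = f by omega, hf_false]
    have hf''m : f'' ≠ m := by
      intro h
      rw [h, hym] at hρf''
      exact absurd hρf'' (by simp)
    rw [lt_iff (by rw [List.length_rotate, List.length_reverse])]
    rw [hβlen]
    rcases lt_or_gt_of_ne hf''m with hltm | hgtm
    · refine ⟨f'', by omega, ?_, ?_, hrotβrevf''⟩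
      · intro i hi
        rw [hDβ i (by omega) (by omega), hrotβrev i (by omega) (by omega)]
        exact hpre i (by omega)
      · rw [hDβ f'' (by omega) (by omega), hpre f'' hltm]
        exact hρf''
    · refine ⟨m, by omega, ?_, ?_, ?_⟩
      · intro i hi
        rw [hDβ i (by omega) (by omega), hrotβrev i (by omega) (by omega)]
        exact hpre i hi
      · rw [hDβ m (by omega) (by omega)]; exact hxm
      · rw [hrotβrev m (by omega) (by omega)]; exact hym
  -- aperiodicity of β
  have hppβ : pp β = n := by
    have hle : pp β ≤ n := hβlen ▸ pp_le β
    rcases lt_or_eq_of_le hle with hltn | h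
    · exfalso
      have hq0 : 0 < pp β := by
        have : β.length ≠ 0 := by omega
        exact pp_pos this
      have hqdvd : pp β ∣ n := hβlen ▸ pp_dvd β
      have hDq := Dper hβlen hn
      have hfix : β = β.rotate (pp β) := by
        apply ext_D (by rw [List.length_rotate])
        intro i hi
        rw [hβlen] at hi
        rw [D_rotate β (pp β) i (by rw [hβlen]; omega), hβlen]
        rw [hDq i hi, hDq ((i + pp β) % n) (Nat.mod_lt _ (by omega)),
          Nat.mod_mod_of_dvd _ hqdvd, Nat.add_mod_right]
      have := strict_rot (pp β) (by omega) (by omega)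
      rw [← hfix] at this
      exact absurd this (lt_irrefl _)
    · exact h
  refine ⟨?_, ?_⟩
  · rw [hβeq]
    exact ⟨hβlen, hneckβ, hasymβ⟩
  · rw [hβeq]
    exact hppβ


lemma lastzero_inj_lt {α1 α2 : List Bool} {n : ℕ} (hn : 1 ≤ n)
    (hA1 : α1 ∈ A n) (hA2 : α2 ∈ A n) (hpl1 : pp α1 < n) (hpl2 : pp α2 < n)
    (hplt : pp α1 < pp α2) (heq : lastzero α1 = lastzero α2) : False := by
  obtain ⟨f1, hf1_lt, hf1_ge0, hf1_false, hf1_max, hβ1⟩ := lastfalse_setup hn hA1 hpl1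
  obtain ⟨f2, hf2_lt, hf2_ge0, hf2_false, hf2_max, hβ2⟩ := lastfalse_setup hn hA2 hpl2
  have hlen1 : α1.length = n := hA1.1
  have hlen2 : α2.length = n := hA2.1
  obtain ⟨-, hneck2, -⟩ := hA2
  obtain ⟨p1, hp1def⟩ : ∃ q, q = pp α1 := ⟨_, rfl⟩
  obtain ⟨p2, hp2def⟩ : ∃ q, q = pp α2 := ⟨_, rfl⟩
  have hp1n : p1 < n := by rw [hp1def]; exact hpl1
  have hp2n : p2 < n := by rw [hp2def]; exact hpl2
  have hplt' : p1 < p2 := by rw [hp1def, hp2def]; exact hplt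
  have hp10 : 0 < p1 := by rw [hp1def]; exact pp_pos (by rw [hlen1]; omega)
  have hp20 : 0 < p2 := by rw [hp2def]; exact pp_pos (by rw [hlen2]; omega)
  have h2p1 : 2 * p1 ≤ n := by rw [hp1def]; exact two_mul_pp_le hlen1 hn hpl1
  have h2p2 : 2 * p2 ≤ n := by rw [hp2def]; exact two_mul_pp_le hlen2 hn hpl2
  have hDper1 : ∀ i < n, D α1 i = D α1 (i % p1) := by rw [hp1def]; exact Dper hlen1 hn
  have hDper2 : ∀ i < n, D α2 i = D α2 (i % p2) := by rw [hp2def]; exact Dper hlen2 hn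
  have hp2dvd : p2 ∣ n := by rw [hp2def]; exact hlen2 ▸ pp_dvd α2
  have hf1_ge : n - p1 ≤ f1 := by rw [hp1def]; exact hf1_ge0
  have hf2_ge : n - p2 ≤ f2 := by rw [hp2def]; exact hf2_ge0
  have hββ : α1.set f1 true = α2.set f2 true := by rw [← hβ1, heq, hβ2]
  have hDβ1 : ∀ i < n, i ≠ f1 → D (α1.set f1 true) i = D α1 i := by
    intro i hi hne
    rw [D_set (by rw [hlen1]; omega), if_neg (fun h => hne h.symm)]
  have hDβf1 : D (α1.set f1 true) f1 = true := by
    rw [D_set (by rw [hlen1]; omega), if_pos rfl]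
  have hDβ2 : ∀ i < n, i ≠ f2 → D (α1.set f1 true) i = D α2 i := by
    intro i hi hne
    rw [hββ, D_set (by rw [hlen2]; omega), if_neg (fun h => hne h.symm)]
  -- prefix of β is p1-periodic
  have hβper1 : ∀ i < n - p1, D (α1.set f1 true) i = D (α1.set f1 true) (i % p1) := by
    intro i hi
    have hi1 : i % p1 < p1 := Nat.mod_lt _ hp10
    rw [hDβ1 i (by omega) (by omega), hDβ1 (i % p1) (by omega) (by omega)]
    exact hDper1 i (by omega)
  -- the first p2 symbols of α2 are p1-reduced
  have hU1 : ∀ j < p2, D α2 j = D α2 (j % p1) := by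
    intro j hj
    have hj1 : j % p1 < p1 := Nat.mod_lt _ hp10
    have e1 : D α2 j = D (α1.set f1 true) j := (hDβ2 j (by omega) (by omega)).symm
    have e2 := hβper1 j (by omega)
    have e3 := hDβ2 (j % p1) (by omega) (by omega)
    rw [e1, e2, e3]
  -- value of rotations of α2 within one period
  have hrotval : ∀ r i, i < n → D (α2.rotate r) i = D α2 ((i + r) % p2) := by
    intro r i hi
    rw [D_rotate α2 r i (by rw [hlen2]; omega), hlen2,
      hDper2 ((i + r) % n) (Nat.mod_lt _ (by omega)), Nat.mod_mod_of_dvd _ hp2dvd]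
  -- the fixedness of α2's period word under rotation by p1
  have hvi : ∀ i < p2, D α2 ((i + p1) % p2) = D α2 i := by
    by_contra hc
    push_neg at hc
    obtain ⟨i0, hi0, hne0⟩ := hc
    have hSne : {i | i < p2 ∧ D α2 ((i + p1) % p2) ≠ D α2 i}.Nonempty := ⟨i0, hi0, hne0⟩
    obtain ⟨m1, hm1mem, hm1min'⟩ :
        ∃ m1, m1 ∈ {i | i < p2 ∧ D α2 ((i + p1) % p2) ≠ D α2 i} ∧
          ∀ i < m1, i ∉ {i | i < p2 ∧ D α2 ((i + p1) % p2) ≠ D α2 i} :=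
      ⟨sInf _, Nat.sInf_mem hSne, fun i hi => Nat.notMem_of_lt_sInf hi⟩
    obtain ⟨hm1lt, hm1ne⟩ := hm1mem
    have hm1min : ∀ i, i < m1 → i < p2 → D α2 ((i + p1) % p2) = D α2 i := by
      intro i hi hip
      by_contra hcc
      exact hm1min' i hi ⟨hip, hcc⟩
    have hm1ge : p2 - p1 ≤ m1 := by
      by_contra hltc
      push_neg at hltc
      apply hm1ne
      rw [Nat.mod_eq_of_lt (by omega : m1 + p1 < p2), hU1 (m1 + p1) (by omega),
        Nat.add_mod_right, ← hU1 m1 (by omega)]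
    have hmodval : (m1 + p1) % p2 = m1 + p1 - p2 := by
      rw [Nat.mod_eq_sub_mod (by omega), Nat.mod_eq_of_lt (by omega)]
    have hdir : D α2 m1 = false := by
      by_contra hdc
      have hvt : D α2 m1 = true := by revert hdc; cases (D α2 m1) <;> simp
      have hvf : D α2 ((m1 + p1) % p2) = false := by
        revert hm1ne; rw [hvt]; cases (D α2 ((m1 + p1) % p2)) <;> simp
      have hlt1 : α2.rotate p1 < α2 := by
        rw [lt_iff (by rw [List.length_rotate])]
        refine ⟨m1, by rw [List.length_rotate, hlen2]; omega, ?_, ?_, hvt⟩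
        · intro i hi
          rw [hrotval p1 i (by omega), hm1min i hi (by omega)]
        · rw [hrotval p1 m1 (by omega)]; exact hvf
      exact absurd (hneck2 p1) (show α2.rotate p1 < α2 from hlt1).not_ge
    have hvt2 : D α2 ((m1 + p1) % p2) = true := by
      revert hm1ne; rw [hdir]; cases (D α2 ((m1 + p1) % p2)) <;> simp
    have hlt2 : α2.rotate (p2 - p1) < α2 := by
      rw [lt_iff (by rw [List.length_rotate])]
      refine ⟨m1 + p1 - p2, by rw [List.length_rotate, hlen2]; omega, ?_, ?_, ?_⟩
      · intro i hi
        rw [hrotval (p2 - p1) i (by omega)]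
        have hlt' : i + (p2 - p1) < p2 := by omega
        rw [Nat.mod_eq_of_lt hlt']
        have hjm : i + (p2 - p1) < m1 := by omega
        have hmin := hm1min (i + (p2 - p1)) hjm (by omega)
        have harg : (i + (p2 - p1) + p1) % p2 = i := by
          rw [show i + (p2 - p1) + p1 = i + p2 by omega, Nat.add_mod_right,
            Nat.mod_eq_of_lt (by omega)]
        rw [harg] at hmin
        rw [← hmin]
      · rw [hrotval (p2 - p1) _ (by omega)]
        rw [show (m1 + p1 - p2) + (p2 - p1) = m1 by omega, Nat.mod_eq_of_lt (by omega), hdir]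
      · rw [← hmodval]; exact hvt2
    exact absurd (hneck2 (p2 - p1)) (show α2.rotate (p2 - p1) < α2 from hlt2).not_ge
  -- gcd descent
  have hgood1 : GoodF p2 (fun j => D α2 j) p1 := fun i hi => hvi i hi
  have hgood2 : GoodF p2 (fun j => D α2 j) p2 := goodF_self _ _
  have hg := goodF_gcd p1 p2 hgood1 hgood2
  have hg0 : 0 < Nat.gcd p1 p2 := Nat.gcd_pos_of_pos_left _ hp10
  have hgd2 : Nat.gcd p1 p2 ∣ p2 := Nat.gcd_dvd_right _ _
  have hgle : Nat.gcd p1 p2 ≤ p1 := Nat.le_of_dvd hp10 (Nat.gcd_dvd_left _ _)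
  have hu := periodF_of_goodF hg0 hg
  have hα2g : ∀ i < α2.length, D α2 i = D α2 (i % Nat.gcd p1 p2) := by
    intro i hi
    rw [hlen2] at hi
    have h1 : i % p2 < p2 := Nat.mod_lt _ hp20
    have h2 := hu (i % p2) h1
    rw [hDper2 i (by omega), h2, Nat.mod_mod_of_dvd _ hgd2]
  have hmem := mem_perSet_of_period hg0 (by rw [hlen2]; exact hgd2.trans hp2dvd) hα2g
  have hfin := pp_min hmem
  rw [← hp2def] at hfin
  omega

lemma lastzero_injOn {n : ℕ} (hn : 1 ≤ n) {α1 α2 : List Bool}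
    (hA1 : α1 ∈ A n) (hA2 : α2 ∈ A n) (hpl1 : pp α1 < n) (hpl2 : pp α2 < n)
    (heq : lastzero α1 = lastzero α2) : α1 = α2 := by
  rcases lt_trichotomy (pp α1) (pp α2) with h | h | h
  · exact (lastzero_inj_lt hn hA1 hA2 hpl1 hpl2 h heq).elim
  · -- equal minimal periods
    obtain ⟨f1, hf1_lt, hf1_ge0, hf1_false, hf1_max, hβ1⟩ := lastfalse_setup hn hA1 hpl1
    obtain ⟨f2, hf2_lt, hf2_ge0, hf2_false, hf2_max, hβ2⟩ := lastfalse_setup hn hA2 hpl2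
    have hlen1 : α1.length = n := hA1.1
    have hlen2 : α2.length = n := hA2.1
    have hββ : α1.set f1 true = α2.set f2 true := by rw [← hβ1, heq, hβ2]
    obtain ⟨q, hqdef⟩ : ∃ q, q = pp α1 := ⟨_, rfl⟩
    have hq0 : 0 < q := by rw [hqdef]; exact pp_pos (by rw [hlen1]; omega)
    have h2q : 2 * q ≤ n := by rw [hqdef]; exact two_mul_pp_le hlen1 hn hpl1
    have hDper1 : ∀ i < n, D α1 i = D α1 (i % q) := by rw [hqdef]; exact Dper hlen1 hn
    have hDper2 : ∀ i < n, D α2 i = D α2 (i % q) := by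
      rw [hqdef, h]; exact Dper hlen2 hn
    have hf1_ge : n - q ≤ f1 := by rw [hqdef]; exact hf1_ge0
    have hf2_ge : n - q ≤ f2 := by rw [hqdef, h]; exact hf2_ge0
    have hDβ1 : ∀ i < n, i ≠ f1 → D (α1.set f1 true) i = D α1 i := by
      intro i hi hne
      rw [D_set (by rw [hlen1]; omega), if_neg (fun hx => hne hx.symm)]
    have hDβf1 : D (α1.set f1 true) f1 = true := by
      rw [D_set (by rw [hlen1]; omega), if_pos rfl]
    have hDβ2 : ∀ i < n, i ≠ f2 → D (α1.set f1 true) i = D α2 i := by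
      intro i hi hne
      rw [hββ, D_set (by rw [hlen2]; omega), if_neg (fun hx => hne hx.symm)]
    by_cases hf : f1 = f2
    · apply ext_D (by rw [hlen1, hlen2])
      intro i hi
      rw [hlen1] at hi
      by_cases hif : i = f1
      · rw [hif, hf1_false, hf, hf2_false]
      · rw [← hDβ1 i (by omega) hif, hDβ2 i (by omega) (by omega)]
    · exfalso
      have hmod : f1 % q < q := Nat.mod_lt _ hq0
      have c1 : D α1 f1 = D α1 (f1 % q) := hDper1 f1 (by omega)
      have c2 : D α1 (f1 % q) = D (α1.set f1 true) (f1 % q) :=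
        (hDβ1 _ (by omega) (by omega)).symm
      have c3 : D (α1.set f1 true) (f1 % q) = D α2 (f1 % q) :=
        hDβ2 _ (by omega) (by omega)
      have c4 : D α2 (f1 % q) = D α2 f1 := (hDper2 f1 (by omega)).symm
      have c5 : D α2 f1 = D (α1.set f1 true) f1 := (hDβ2 f1 (by omega) hf).symm
      have : D α1 f1 = D (α1.set f1 true) f1 := by
        rw [c1, c2, c3, c4, c5]
      rw [hf1_false, hDβf1] at this
      exact absurd this (by simp)
  · exact (lastzero_inj_lt hn hA2 hA1 hpl2 hpl1 h heq.symm).elim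

lemma ap_length_eq (α : List Bool) : (ap α).length = pp α := by
  have h := pp_le α
  show (α.take _).length = _
  rw [List.length_take]
  exact min_eq_left h

end OSAux

open OSAux in
/-- For every `n ≥ 1`, `n·|A n| ≤ 2·L_n` where
`L_n = Σ_{α ∈ A n} |ap α|`. -/
theorem card_A_le_twice_L (n : ℕ) (hn : 1 ≤ n) :
    n * (A n).ncard ≤ 2 * ∑ᶠ α ∈ A n, (ap α).length := by
  classical
  have hfin : (A n).Finite := (List.finite_length_eq Bool n).subset (fun α hα => hα.1)
  rw [finsum_mem_eq_finite_toFinset_sum _ hfin]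
  have hmemF : ∀ α, α ∈ hfin.toFinset ↔ α ∈ A n := fun α => hfin.mem_toFinset
  have hncard : (A n).ncard = hfin.toFinset.card := Set.ncard_eq_toFinset_card _ hfin
  have hple : ∀ α ∈ A n, pp α ≤ n := fun α hα => hα.1 ▸ pp_le α
  set Q := hfin.toFinset.filter (fun α => pp α = n) with hQ
  set P := hfin.toFinset.filter (fun α => ¬ pp α = n) with hP
  have hsplit : Q.card + P.card = hfin.toFinset.card :=
    Finset.card_filter_add_card_filter_not _
  have hPQ : P.card ≤ Q.card := by
    apply Finset.card_le_card_of_injOn lastzero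
    · intro α hα
      rw [Finset.mem_coe, Finset.mem_filter, hmemF] at hα
      obtain ⟨hA1, hne⟩ := hα
      have hlt : pp α < n := lt_of_le_of_ne (hple α hA1) hne
      obtain ⟨h1, h2⟩ := lastzero_main hn hA1 hlt
      rw [hQ, Finset.mem_coe, Finset.mem_filter, hmemF]
      exact ⟨h1, h2⟩
    · intro a ha b hb hab
      rw [Finset.coe_filter] at ha hb
      obtain ⟨ha1, ha2⟩ := ha
      obtain ⟨hb1, hb2⟩ := hb
      rw [hmemF] at ha1 hb1
      exact lastzero_injOn hn ha1 hb1
        (lt_of_le_of_ne (hple _ ha1) ha2) (lt_of_le_of_ne (hple _ hb1) hb2) hab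
  have hsumQ : n * Q.card ≤ ∑ α ∈ hfin.toFinset, (ap α).length := by
    calc n * Q.card = ∑ _α ∈ Q, n := by rw [Finset.sum_const, smul_eq_mul, Nat.mul_comm]
    _ = ∑ α ∈ Q, (ap α).length := by
        apply Finset.sum_congr rfl
        intro α hα
        rw [hQ, Finset.mem_filter] at hα
        rw [ap_length_eq, hα.2]
    _ ≤ ∑ α ∈ hfin.toFinset, (ap α).length :=
        Finset.sum_le_sum_of_subset (Finset.filter_subset _ _)
  have h1 : n * P.card ≤ n * Q.card := Nat.mul_le_mul_left _ hPQ
  have h2 : n * (A n).ncard = n * Q.card + n * P.card := by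
    rw [hncard, ← hsplit, Nat.mul_add]
  omega
end

section
/- Let α and β be asymmetric bracelets of length n (possibly equal). Then no rotation of α equals the reversal of a rotation of β. Consequently, if a string belongs to S(n), its reversal does not belong to S(n). -/
lemma key_no_rot (n : ℕ) (α β : List Bool) (hα : α ∈ A n) (hβ : β ∈ A n) :
    ∀ k l : ℕ, α.rotate k ≠ (β.rotate l).reverse := by
  intro k l h
  have h1 : List.IsRotated β.reverse α := by
    have : List.IsRotated β.reverse (β.rotate l).reverse :=
      ((List.IsRotated.forall β l).symm).reverse
    rw [← h] at this
    exact this.trans (List.IsRotated.forall α k)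
  have h2 : List.IsRotated α.reverse β := by
    have := h1.reverse
    rw [List.reverse_reverse] at this
    exact this.symm
  obtain ⟨m, hm⟩ := h1
  obtain ⟨m', hm'⟩ := h2
  have hba : β < α := hm ▸ hβ.2.2 m
  have hab : α < β := hm' ▸ hα.2.2 m'
  exact absurd hab hba.asymm

/-- If `α` and `β` are asymmetric bracelets of length `n` (possibly equal),
then no rotation of `α` equals the reversal of a rotation of `β`.  Consequently, if a string
belongs to `S n`, its reversal does not. -/
theorem no_rotation_eq_reversed_rotation (n : ℕ) (α β : List Bool)
    (hα : α ∈ A n) (hβ : β ∈ A n) :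
    (∀ k l : ℕ, α.rotate k ≠ (β.rotate l).reverse) ∧
      (∀ γ : List Bool, γ ∈ S n → γ.reverse ∉ S n) := by
  refine ⟨key_no_rot n α β hα hβ, ?_⟩
  rintro γ ⟨α', hα', k, hk⟩ ⟨β', hβ', l, hl⟩
  exact key_no_rot n α' β' hα' hβ' k l (by rw [hk, hl, List.reverse_reverse])
end

section
/- If o₁o₂⋯o_m is an orientable sequence of order n (with n ≥ 2 and m ≥ 1), then m ≤ 2^{n−1} − 2^{⌊(n−1)/2⌋}. -/
/-! Auxiliary counting lemmas -/
/-- The finset of all length-`n` boolean lists. -/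
noncomputable def allL (n : ℕ) : Finset (List Bool) :=
  (Finset.univ : Finset (List.Vector Bool n)).map
    ⟨List.Vector.toList, List.Vector.toList_injective⟩

lemma mem_allL {n : ℕ} {l : List Bool} : l ∈ allL n ↔ l.length = n := by
  simp only [allL, Finset.mem_map, Finset.mem_univ, true_and, Function.Embedding.coeFn_mk]
  constructor
  · rintro ⟨v, rfl⟩; exact v.2
  · intro h; exact ⟨⟨l, h⟩, rfl⟩

lemma card_allL (n : ℕ) : (allL n).card = 2 ^ n := by
  rw [allL, Finset.card_map, Finset.card_univ, card_vector, Fintype.card_bool]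

lemma build_pal {n : ℕ} {γ : List Bool} (h : γ.length = (n + 1) / 2) :
    (γ ++ (γ.take (n / 2)).reverse).reverse = γ ++ (γ.take (n / 2)).reverse := by
  have hsplit := List.take_append_drop (n / 2) γ
  have hδlen : (γ.drop (n / 2)).length ≤ 1 := by
    rw [List.length_drop, h]; omega
  have hδ : (γ.drop (n / 2)).reverse = γ.drop (n / 2) := by
    rcases hd : γ.drop (n / 2) with _ | ⟨c, t⟩
    · rfl
    · rw [hd] at hδlen
      simp only [List.length_cons] at hδlen
      have : t = [] := List.eq_nil_of_length_eq_zero (by omega)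
      subst this; rfl
  set τ := γ.take (n / 2) with hτ
  set δ := γ.drop (n / 2) with hδ'
  rw [← hsplit]
  rw [List.reverse_append, List.reverse_append, List.reverse_reverse, hδ, List.append_assoc]

lemma card_pal (n : ℕ) :
    ((allL n).filter (fun l => l.reverse = l)).card = 2 ^ ((n + 1) / 2) := by
  rw [← card_allL ((n + 1) / 2)]
  apply Finset.card_bij' (fun p _ => p.take ((n + 1) / 2))
      (fun γ _ => γ ++ (γ.take (n / 2)).reverse)
  case hi =>
    intro p hp
    rw [Finset.mem_filter, mem_allL] at hp
    rw [mem_allL, List.length_take, hp.1]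
    omega
  case hj =>
    intro γ hγ
    rw [mem_allL] at hγ
    rw [Finset.mem_filter, mem_allL, List.length_append, List.length_reverse,
      List.length_take, hγ]
    refine ⟨by omega, build_pal hγ⟩
  case left_inv =>
    intro p hp
    rw [Finset.mem_filter, mem_allL] at hp
    obtain ⟨hlen, hpal⟩ := hp
    have ht : (p.take ((n + 1) / 2)).take (n / 2) = p.take (n / 2) := by
      rw [List.take_take]; congr 1; omega
    rw [ht, List.reverse_take, hpal, hlen]
    have h2 : n - n / 2 = (n + 1) / 2 := by omega
    rw [h2, List.take_append_drop]
  case right_inv =>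
    intro γ hγ
    rw [mem_allL] at hγ
    rw [← hγ, List.take_left]

/-- If `o₁⋯o_m` is an orientable sequence of order `n` (`n ≥ 2`, `m ≥ 1`),
then `m ≤ 2^{n-1} - 2^{⌊(n-1)/2⌋}`. -/
theorem orientable_upper_bound (n m : ℕ) (hn : 2 ≤ n) (o : List Bool)
    (hm : o.length = m) (hm1 : 1 ≤ m) (hos : IsOS n o) :
    m ≤ 2 ^ (n - 1) - 2 ^ ((n - 1) / 2) := by
  classical
  subst hm
  set W : Finset (List Bool) := (Finset.range o.length).image (cycWin o n) with hW
  set Wr : Finset (List Bool) := W.image List.reverse with hWr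
  have hlenwin : ∀ i, (cycWin o n i).length = n := fun i => by simp [cycWin]
  have hWcard : W.card = o.length := by
    rw [hW, Finset.card_image_of_injOn, Finset.card_range]
    intro i hi j hj h
    simp only [Finset.coe_range, Set.mem_Iio] at hi hj
    exact (hos i hi j hj).1 h
  have hWrcard : Wr.card = o.length := by
    rw [hWr, Finset.card_image_of_injective _ List.reverse_injective, hWcard]
  have hdisj : Disjoint W Wr := by
    rw [Finset.disjoint_left]
    rintro x hx hx'
    rw [hWr, Finset.mem_image] at hx'
    obtain ⟨y, hy, rfl⟩ := hx'
    rw [hW, Finset.mem_image] at hx hy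
    obtain ⟨i, hi, hxi⟩ := hx
    obtain ⟨j, hj, rfl⟩ := hy
    rw [Finset.mem_range] at hi hj
    exact (hos i hi j hj).2 hxi
  have hnonpal : ∀ x ∈ W ∪ Wr, x ∈ (allL n).filter (fun l => ¬ l.reverse = l) := by
    intro x hx
    rw [Finset.mem_union] at hx
    rw [Finset.mem_filter, mem_allL]
    rcases hx with hx | hx
    · rw [hW, Finset.mem_image] at hx
      obtain ⟨i, hi, rfl⟩ := hx
      rw [Finset.mem_range] at hi
      exact ⟨hlenwin i, fun h => (hos i hi i hi).2 h.symm⟩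
    · rw [hWr, Finset.mem_image] at hx
      obtain ⟨y, hy, rfl⟩ := hx
      rw [hW, Finset.mem_image] at hy
      obtain ⟨i, hi, rfl⟩ := hy
      rw [Finset.mem_range] at hi
      refine ⟨by rw [List.length_reverse]; exact hlenwin i, fun h => ?_⟩
      exact (hos i hi i hi).2 (by rw [List.reverse_reverse] at h; exact h)
  have hcardsum := Finset.card_filter_add_card_filter_not
      (s := allL n) (p := fun l => l.reverse = l)
  rw [card_allL, card_pal] at hcardsum
  have hle : (W ∪ Wr).card ≤ ((allL n).filter (fun l => ¬ l.reverse = l)).card :=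
    Finset.card_le_card hnonpal
  rw [Finset.card_union_of_disjoint hdisj, hWcard, hWrcard] at hle
  have e1 : 2 ^ n = 2 * 2 ^ (n - 1) := by
    conv_lhs => rw [show n = (n - 1) + 1 by omega]
    rw [pow_succ]; ring
  have e2 : 2 ^ ((n + 1) / 2) = 2 * 2 ^ ((n - 1) / 2) := by
    rw [show (n + 1) / 2 = (n - 1) / 2 + 1 by omega, pow_succ]; ring
  omega
end
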